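/- arXiv:2405.03086 — 6 statements merged into one kernel-verified Lean document; each statement's English description precedes it below -/
import Mathlib

section
/- Let q be a prime power and E, F ⊆ 𝔽_q^d be finite sets, and let λ ∈ 𝔽_q with λ ≠ 0. Let N_λ(E,F) denote the number of pairs (x,y) ∈ E × F with x·y = λ. Then |N_λ(E,F) − |E||F|/q| ≤ C · q^((d−1)/2) · |E|^(1/2) · |F|^(1/2) for some absolute constant C. -/
set_option linter.unusedSectionVars false
set_option maxHeartbeats 1000000

open Finset

namespace DotProdAux
open AddChar


lemma cs_lemma {V : Type*} [Fintype V] (E : Finset V) (g : V → ℂ) :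
    ‖∑ x ∈ E, g x‖ ≤ Real.sqrt E.card * Real.sqrt (∑ x : V, ‖g x‖ ^ 2) := by
  calc ‖∑ x ∈ E, g x‖ ≤ ∑ x ∈ E, ‖g x‖ := norm_sum_le _ _
    _ = Real.sqrt ((∑ x ∈ E, ‖g x‖) ^ 2) := by
        rw [Real.sqrt_sq (Finset.sum_nonneg fun x _ => norm_nonneg _)]
    _ ≤ Real.sqrt ((E.card : ℝ) * ∑ x : V, ‖g x‖ ^ 2) := by
        apply Real.sqrt_le_sqrt
        calc (∑ x ∈ E, ‖g x‖) ^ 2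
            = (∑ x ∈ E, 1 * ‖g x‖) ^ 2 := by simp
          _ ≤ (∑ x ∈ E, (1:ℝ) ^ 2) * ∑ x ∈ E, ‖g x‖ ^ 2 :=
              Finset.sum_mul_sq_le_sq_mul_sq E (fun _ => (1:ℝ)) (fun x => ‖g x‖)
          _ ≤ (E.card : ℝ) * ∑ x : V, ‖g x‖ ^ 2 := by
              apply mul_le_mul
              · simp
              · exact Finset.sum_le_sum_of_subset_of_nonneg (Finset.subset_univ E)
                  (fun x _ _ => by positivity)
              · positivity
              · positivity
    _ = Real.sqrt E.card * Real.sqrt (∑ x : V, ‖g x‖ ^ 2) := by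
        rw [Real.sqrt_mul (by positivity)]

lemma hnum_lemma (q : ℝ) (hq0 : 0 < q) (d : ℕ) (a : ℝ) :
    Real.sqrt (q ^ d * (2 * q * a)) ≤ 2 * q ^ (((d : ℝ) + 1) / 2) * Real.sqrt a := by
  have e1 : q ^ d * (2 * q * a) = 2 * (q ^ (d + 1)) * a := by ring
  rw [e1, Real.sqrt_mul (by positivity), Real.sqrt_mul (by positivity)]
  have e2 : Real.sqrt (q ^ (d + 1)) = q ^ (((d : ℝ) + 1) / 2) := by
    rw [Real.sqrt_eq_rpow, ← Real.rpow_natCast q (d + 1), ← Real.rpow_mul hq0.le]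
    push_cast
    ring_nf
  rw [e2]
  have hsq2 : Real.sqrt 2 ≤ 2 := by
    have h24 : Real.sqrt 2 ≤ Real.sqrt 4 := Real.sqrt_le_sqrt (by norm_num)
    have h4 : Real.sqrt 4 = 2 := by
      rw [show (4:ℝ) = 2 ^ 2 by norm_num]
      exact Real.sqrt_sq (by norm_num)
    linarith
  have h1 : (0:ℝ) ≤ q ^ (((d : ℝ) + 1) / 2) := by positivity
  nlinarith [mul_nonneg (mul_nonneg (by linarith : (0:ℝ) ≤ 2 - Real.sqrt 2) h1)
    (Real.sqrt_nonneg a)]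

variable {F : Type} [Field F] [Fintype F] [DecidableEq F]


lemma addChar_map_sum {M : Type*} [CommMonoid M] (ψ : AddChar F M) {ι : Type*} (s : Finset ι)
    (f : ι → F) : ψ (∑ i ∈ s, f i) = ∏ i ∈ s, ψ (f i) := by
  induction s using Finset.cons_induction with
  | empty => simp
  | cons a s ha ih => rw [Finset.sum_cons, Finset.prod_cons, ψ.map_add_eq_mul, ih]

lemma sum_char_dot (ψ : AddChar F ℂ) (hψ : ψ.IsPrimitive) (d : ℕ) (v : Fin d → F) :
    ∑ x : Fin d → F, ψ (∑ i, x i * v i) = if v = 0 then (Fintype.card F : ℂ) ^ d else 0 := by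
  have h1 : ∀ x : Fin d → F, ψ (∑ i, x i * v i) = ∏ i, ψ (x i * v i) :=
    fun x => addChar_map_sum ψ _ _
  have h2 : ∀ i : Fin d, ∑ a : F, ψ (a * v i) = if v i = 0 then (Fintype.card F : ℂ) else 0 :=
    fun i => by rw [sum_mulShift _ hψ]; split_ifs <;> simp
  simp_rw [h1]
  rw [← Fintype.prod_sum (fun i (a : F) => ψ (a * v i))]
  by_cases hv : v = 0
  · subst hv; simp [h2]
  · obtain ⟨j, hj⟩ : ∃ j, v j ≠ 0 := by
      by_contra h; push_neg at h; exact hv (funext h)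
    rw [if_neg hv]
    exact Finset.prod_eq_zero (mem_univ j) (by rw [h2 j, if_neg hj])

lemma claim2 (ψ : AddChar F ℂ) (hψ : ψ.IsPrimitive) (d : ℕ) (A : Finset (Fin d → F)) (lam : F) :
    ∑ x : Fin d → F,
      ((∑ p ∈ A ×ˢ univ.erase (0 : F), ψ (p.2 * ((∑ i, x i * p.1 i) - lam)))
        * (starRingEnd ℂ) (∑ p ∈ A ×ˢ univ.erase (0 : F), ψ (p.2 * ((∑ i, x i * p.1 i) - lam))))
      = (Fintype.card F : ℂ) ^ d
        * ∑ p ∈ A ×ˢ univ.erase (0 : F), ∑ r ∈ A ×ˢ univ.erase (0 : F),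
            (if (fun i => p.2 * p.1 i - r.2 * r.1 i) = (0 : Fin d → F)
              then ψ (lam * (r.2 - p.2)) else 0) := by
  have hch : 0 < ringChar F := Nat.pos_of_ne_zero (CharP.ringChar_ne_zero_of_finite F)
  set B := A ×ˢ univ.erase (0 : F) with hB
  have hconj : ∀ x : Fin d → F,
      (starRingEnd ℂ) (∑ p ∈ B, ψ (p.2 * ((∑ i, x i * p.1 i) - lam)))
        = ∑ r ∈ B, ψ (-(r.2 * ((∑ i, x i * r.1 i) - lam))) := by
    intro x
    rw [map_sum]
    exact Finset.sum_congr rfl fun r _ => by rw [AddChar.starComp_apply hch, AddChar.inv_apply]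
  have hmul : ∀ x : Fin d → F,
      (∑ p ∈ B, ψ (p.2 * ((∑ i, x i * p.1 i) - lam)))
        * (starRingEnd ℂ) (∑ p ∈ B, ψ (p.2 * ((∑ i, x i * p.1 i) - lam)))
      = ∑ p ∈ B, ∑ r ∈ B,
          ψ ((∑ i, x i * (p.2 * p.1 i - r.2 * r.1 i)) + lam * (r.2 - p.2)) := by
    intro x
    rw [hconj x, Finset.sum_mul_sum]
    refine Finset.sum_congr rfl fun p _ => Finset.sum_congr rfl fun r _ => ?_
    rw [← ψ.map_add_eq_mul]
    congr 1
    have e : ∑ i, x i * (p.2 * p.1 i - r.2 * r.1 i)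
        = p.2 * (∑ i, x i * p.1 i) - r.2 * (∑ i, x i * r.1 i) := by
      rw [Finset.mul_sum, Finset.mul_sum, ← Finset.sum_sub_distrib]
      exact Finset.sum_congr rfl fun i _ => by ring
    rw [e]
    ring
  simp_rw [hmul]
  rw [Finset.sum_comm]
  rw [Finset.mul_sum]
  refine Finset.sum_congr rfl fun p hp => ?_
  rw [Finset.sum_comm, Finset.mul_sum]
  refine Finset.sum_congr rfl fun r hr => ?_
  have : ∀ x : Fin d → F,
      ψ ((∑ i, x i * (p.2 * p.1 i - r.2 * r.1 i)) + lam * (r.2 - p.2))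
        = ψ (∑ i, x i * (p.2 * p.1 i - r.2 * r.1 i)) * ψ (lam * (r.2 - p.2)) :=
    fun x => ψ.map_add_eq_mul _ _
  simp_rw [this]
  rw [← Finset.sum_mul, sum_char_dot ψ hψ d (fun i => p.2 * p.1 i - r.2 * r.1 i)]
  split_ifs with h
  · ring
  · simp


lemma claim1 (ψ : AddChar F ℂ) (hψ : ψ.IsPrimitive) (d : ℕ) (E A : Finset (Fin d → F)) (lam : F) :
    ((Fintype.card F : ℂ)) * (((E ×ˢ A).filter (fun p => ∑ i, p.1 i * p.2 i = lam)).card : ℂ)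
      = (E.card : ℂ) * A.card
        + ∑ x ∈ E, ∑ y ∈ A, ∑ t ∈ univ.erase (0 : F),
            ψ (t * ((∑ i, x i * y i) - lam)) := by
  have h1 : ∀ p : (Fin d → F) × (Fin d → F),
      (∑ t : F, ψ (t * ((∑ i, p.1 i * p.2 i) - lam)))
        = if (∑ i, p.1 i * p.2 i) = lam then (Fintype.card F : ℂ) else 0 := by
    intro p
    rw [sum_mulShift _ hψ]
    simp [sub_eq_zero]
  have h2 : ∑ p ∈ E ×ˢ A, (∑ t : F, ψ (t * ((∑ i, p.1 i * p.2 i) - lam)))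
      = ((Fintype.card F : ℂ)) * (((E ×ˢ A).filter (fun p => ∑ i, p.1 i * p.2 i = lam)).card : ℂ) := by
    simp_rw [h1]
    rw [← Finset.sum_filter]
    simp [mul_comm]
  have h3 : ∀ p : (Fin d → F) × (Fin d → F),
      (∑ t : F, ψ (t * ((∑ i, p.1 i * p.2 i) - lam)))
        = 1 + ∑ t ∈ univ.erase (0 : F), ψ (t * ((∑ i, p.1 i * p.2 i) - lam)) := by
    intro p
    rw [← Finset.add_sum_erase _ _ (mem_univ (0 : F))]
    simp
  rw [← h2, Finset.sum_congr rfl (fun p _ => h3 p), Finset.sum_add_distrib, Finset.sum_const,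
    Finset.card_product]
  congr 1
  · simp [mul_comm]
  · rw [Finset.sum_product]


lemma claim3 (ψ : AddChar F ℂ) (hψ : ψ.IsPrimitive) (d : ℕ) (A : Finset (Fin d → F))
    (lam : F) (hlam : lam ≠ 0) :
    ‖∑ p ∈ A ×ˢ univ.erase (0 : F), ∑ r ∈ A ×ˢ univ.erase (0 : F),
        (if (fun i => p.2 * p.1 i - r.2 * r.1 i) = (0 : Fin d → F)
          then ψ (lam * (r.2 - p.2)) else 0)‖
      ≤ 2 * (Fintype.card F : ℝ) * A.card := by
  set K := univ.erase (0 : F) with hK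
  set q : ℝ := (Fintype.card F : ℝ) with hq
  have hq2 : (2 : ℝ) ≤ q := by
    have h1 : 2 ≤ Fintype.card F := Fintype.one_lt_card
    rw [hq]; exact_mod_cast h1
  -- collapse the r-sum
  have hinner : ∀ y : Fin d → F, ∀ t : F, t ∈ K →
      ∑ r ∈ A ×ˢ K, (if (fun i => t * y i - r.2 * r.1 i) = (0 : Fin d → F)
          then ψ (lam * (r.2 - t)) else 0)
      = ∑ t' ∈ K, (if (fun i => (t * t'⁻¹) * y i) ∈ A then ψ (lam * (t' - t)) else 0) := by
    intro y t ht
    rw [Finset.sum_product]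
    rw [Finset.sum_comm]
    refine Finset.sum_congr rfl fun t' ht' => ?_
    have ht'0 : t' ≠ 0 := (Finset.mem_erase.mp ht').1
    have hcond : ∀ y' : Fin d → F,
        ((fun i => t * y i - t' * y' i) = (0 : Fin d → F)) ↔ y' = fun i => (t * t'⁻¹) * y i := by
      intro y'
      rw [funext_iff, funext_iff]
      constructor
      · intro h i
        have h2 := h i
        simp only [Pi.zero_apply, sub_eq_zero] at h2
        field_simp
        rw [h2]; ring
      · intro h i
        simp only [Pi.zero_apply, sub_eq_zero, h i]
        field_simp
    simp_rw [hcond]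
    rw [Finset.sum_ite_eq' A (fun i => (t * t'⁻¹) * y i) (fun _ => ψ (lam * (t' - t)))]
  -- the inner character sum over t'
  have hI : ∀ s : F, ∑ t' ∈ K, ψ ((lam * (1 - s)) * t')
      = (if s = 1 then (Fintype.card F : ℂ) else 0) - 1 := by
    intro s
    rw [hK, Finset.sum_erase_eq_sub (mem_univ (0 : F))]
    have e : ∀ t' : F, ψ ((lam * (1 - s)) * t') = ψ (t' * (lam * (1 - s))) :=
      fun t' => by rw [mul_comm]
    simp_rw [e]
    rw [sum_mulShift _ hψ]
    have e2 : (lam * (1 - s) = 0) ↔ s = 1 := by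
      constructor
      · intro h
        rcases mul_eq_zero.mp h with h | h
        · exact absurd h hlam
        · exact (sub_eq_zero.mp h).symm
      · intro h; simp [h]
    simp only [e2, mul_zero, map_zero_eq_one]
    split_ifs <;> simp
  -- reparametrize (t, t') -> (s, t') with t = s * t'
  have hT : ∀ y : Fin d → F,
      ∑ t ∈ K, ∑ t' ∈ K, (if (fun i => (t * t'⁻¹) * y i) ∈ A then ψ (lam * (t' - t)) else 0)
      = ∑ s ∈ K, (if (fun i => s * y i) ∈ A
          then ((if s = 1 then (Fintype.card F : ℂ) else 0) - 1) else 0) := by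
    intro y
    rw [Finset.sum_comm]
    have e1 : ∀ t' ∈ K,
        ∑ t ∈ K, (if (fun i => (t * t'⁻¹) * y i) ∈ A then ψ (lam * (t' - t)) else 0)
        = ∑ s ∈ K, (if (fun i => s * y i) ∈ A then ψ ((lam * (1 - s)) * t') else 0) := by
      intro t' ht'
      have ht'0 : t' ≠ 0 := (Finset.mem_erase.mp ht').1
      refine Finset.sum_bij' (fun t _ => t * t'⁻¹) (fun s _ => s * t') ?_ ?_ ?_ ?_ ?_
      · intro t ht
        exact Finset.mem_erase.mpr ⟨mul_ne_zero (Finset.mem_erase.mp ht).1 (inv_ne_zero ht'0),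
          mem_univ _⟩
      · intro s hs
        exact Finset.mem_erase.mpr ⟨mul_ne_zero (Finset.mem_erase.mp hs).1 ht'0, mem_univ _⟩
      · intro t ht; field_simp
      · intro s hs; field_simp
      · intro t ht
        have hval : lam * (1 - t * t'⁻¹) * t' = lam * (t' - t) := by
          field_simp
        rw [hval]
    rw [Finset.sum_congr rfl e1, Finset.sum_comm]
    refine Finset.sum_congr rfl fun s hs => ?_
    by_cases hA : (fun i => s * y i) ∈ A
    · simp only [hA, if_true]
      exact hI s
    · simp [hA]
  -- put it together
  rw [Finset.sum_product]
  have hrw : ∀ y ∈ A,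
      ∑ t ∈ K, ∑ r ∈ A ×ˢ K, (if (fun i => t * y i - r.2 * r.1 i) = (0 : Fin d → F)
          then ψ (lam * (r.2 - t)) else 0)
      = ∑ s ∈ K, (if (fun i => s * y i) ∈ A
          then ((if s = 1 then (Fintype.card F : ℂ) else 0) - 1) else 0) := by
    intro y hy
    rw [Finset.sum_congr rfl (hinner y), hT y]
  rw [Finset.sum_congr rfl hrw]
  calc ‖∑ y ∈ A, ∑ s ∈ K, (if (fun i => s * y i) ∈ A
          then ((if s = 1 then (Fintype.card F : ℂ) else 0) - 1) else 0)‖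
      ≤ ∑ y ∈ A, ‖∑ s ∈ K, (if (fun i => s * y i) ∈ A
          then ((if s = 1 then (Fintype.card F : ℂ) else 0) - 1) else 0)‖ := norm_sum_le _ _
    _ ≤ ∑ y ∈ A, (2 * q) := by
        refine Finset.sum_le_sum fun y hy => ?_
        calc ‖∑ s ∈ K, (if (fun i => s * y i) ∈ A
                then ((if s = 1 then (Fintype.card F : ℂ) else 0) - 1) else 0)‖
            ≤ ∑ s ∈ K, ‖(if (fun i => s * y i) ∈ A
                then ((if s = 1 then (Fintype.card F : ℂ) else 0) - 1) else 0)‖ := norm_sum_le _ _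
          _ ≤ ∑ s ∈ K, ((if s = 1 then (q - 1 : ℝ) else 0) + 1) := by
              refine Finset.sum_le_sum fun s hs => ?_
              by_cases h2 : (fun i => s * y i) ∈ A
              · rw [if_pos h2]
                by_cases h1 : s = 1
                · rw [if_pos h1, if_pos h1]
                  have e3 : ((Fintype.card F : ℂ)) - 1 = ((q - 1 : ℝ) : ℂ) := by
                    rw [hq]; push_cast; ring
                  rw [e3, Complex.norm_real, Real.norm_eq_abs, abs_of_nonneg (by linarith)]
                  linarith
                · rw [if_neg h1, if_neg h1]
                  norm_num
              · rw [if_neg h2, norm_zero]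
                split_ifs <;> linarith
          _ ≤ 2 * q := by
              rw [Finset.sum_add_distrib, Finset.sum_const, Finset.sum_ite_eq' K (1 : F)]
              have h1K : (1 : F) ∈ K := Finset.mem_erase.mpr ⟨one_ne_zero, mem_univ _⟩
              have hKcard : (K.card : ℝ) ≤ q := by
                rw [hq]
                exact_mod_cast Finset.card_le_univ K
              simp only [h1K, if_true, nsmul_eq_mul, mul_one]
              linarith
    _ = 2 * q * A.card := by rw [Finset.sum_const, nsmul_eq_mul]; ring
lemma second_moment (ψ : AddChar F ℂ) (hψ : ψ.IsPrimitive) (d : ℕ) (A : Finset (Fin d → F))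
    (lam : F) (hlam : lam ≠ 0) :
    ∑ x : Fin d → F,
        ‖∑ p ∈ A ×ˢ univ.erase (0 : F), ψ (p.2 * ((∑ i, x i * p.1 i) - lam))‖ ^ 2
      ≤ (Fintype.card F : ℝ) ^ d * (2 * (Fintype.card F : ℝ) * A.card) := by
  have e1 : ((∑ x : Fin d → F,
        ‖∑ p ∈ A ×ˢ univ.erase (0 : F), ψ (p.2 * ((∑ i, x i * p.1 i) - lam))‖ ^ 2 : ℝ) : ℂ)
      = ∑ x : Fin d → F,
          ((∑ p ∈ A ×ˢ univ.erase (0 : F), ψ (p.2 * ((∑ i, x i * p.1 i) - lam)))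
            * (starRingEnd ℂ)
                (∑ p ∈ A ×ˢ univ.erase (0 : F), ψ (p.2 * ((∑ i, x i * p.1 i) - lam)))) := by
    push_cast
    refine Finset.sum_congr rfl fun x _ => ?_
    rw [Complex.mul_conj, Complex.normSq_eq_norm_sq]
    push_cast
    ring
  rw [claim2 ψ hψ d A lam] at e1
  have e3 : (∑ x : Fin d → F,
        ‖∑ p ∈ A ×ˢ univ.erase (0 : F), ψ (p.2 * ((∑ i, x i * p.1 i) - lam))‖ ^ 2)
      = ‖((∑ x : Fin d → F,
          ‖∑ p ∈ A ×ˢ univ.erase (0 : F), ψ (p.2 * ((∑ i, x i * p.1 i) - lam))‖ ^ 2 : ℝ) : ℂ)‖ := by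
    rw [Complex.norm_real, Real.norm_eq_abs, abs_of_nonneg (by positivity)]
  rw [e3, e1, norm_mul, norm_pow, Complex.norm_natCast]
  exact mul_le_mul_of_nonneg_left (claim3 ψ hψ d A lam hlam) (by positivity)

theorem main (d : ℕ) (E A : Finset (Fin d → F)) (lam : F) (hlam : lam ≠ 0) :
    |((((E ×ˢ A).filter (fun p => ∑ i, p.1 i * p.2 i = lam)).card : ℝ)
        - (E.card : ℝ) * A.card / Fintype.card F)|
      ≤ 2 * (Fintype.card F : ℝ) ^ (((d : ℝ) - 1) / 2)
          * Real.sqrt E.card * Real.sqrt A.card := by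
  obtain ⟨ψ, hψ⟩ : ∃ ψ : AddChar F ℂ, ψ.IsPrimitive :=
    ⟨_, FiniteField.primitiveChar_to_Complex_isPrimitive F⟩
  have hq2 : (2 : ℝ) ≤ (Fintype.card F : ℝ) := by
    exact_mod_cast (Fintype.one_lt_card : 1 < Fintype.card F)
  have hq0 : (0 : ℝ) < (Fintype.card F : ℝ) := by linarith
  have hqC : ((Fintype.card F : ℂ)) ≠ 0 := Nat.cast_ne_zero.mpr Fintype.card_ne_zero
  set R : ℝ := ((((E ×ˢ A).filter (fun p => ∑ i, p.1 i * p.2 i = lam)).card : ℝ)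
      - (E.card : ℝ) * A.card / Fintype.card F) with hR
  -- complex identity
  have hC : ((Fintype.card F : ℂ)) * (R : ℂ)
      = ∑ x ∈ E, ∑ p ∈ A ×ˢ univ.erase (0 : F), ψ (p.2 * ((∑ i, x i * p.1 i) - lam)) := by
    have hsp : ∀ x : Fin d → F,
        ∑ p ∈ A ×ˢ univ.erase (0 : F), ψ (p.2 * ((∑ i, x i * p.1 i) - lam))
          = ∑ y ∈ A, ∑ t ∈ univ.erase (0 : F), ψ (t * ((∑ i, x i * y i) - lam)) :=
      fun x => Finset.sum_product _ _ _
    rw [Finset.sum_congr rfl fun x _ => hsp x]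
    have hc1 := claim1 ψ hψ d E A lam
    rw [hR]
    push_cast
    field_simp
    field_simp at hc1
    linear_combination hc1
  have key : (Fintype.card F : ℝ) * |R|
      = ‖∑ x ∈ E, ∑ p ∈ A ×ˢ univ.erase (0 : F), ψ (p.2 * ((∑ i, x i * p.1 i) - lam))‖ := by
    rw [← hC, norm_mul, Complex.norm_natCast, Complex.norm_real, Real.norm_eq_abs]
  have bound : (Fintype.card F : ℝ) * |R|
      ≤ Real.sqrt E.card
          * (2 * (Fintype.card F : ℝ) ^ (((d : ℝ) + 1) / 2) * Real.sqrt A.card) := by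
    rw [key]
    calc ‖∑ x ∈ E, ∑ p ∈ A ×ˢ univ.erase (0 : F), ψ (p.2 * ((∑ i, x i * p.1 i) - lam))‖
        ≤ Real.sqrt E.card * Real.sqrt (∑ x : Fin d → F,
            ‖∑ p ∈ A ×ˢ univ.erase (0 : F), ψ (p.2 * ((∑ i, x i * p.1 i) - lam))‖ ^ 2) :=
          cs_lemma E _
      _ ≤ Real.sqrt E.card * Real.sqrt ((Fintype.card F : ℝ) ^ d
            * (2 * (Fintype.card F : ℝ) * A.card)) :=
          mul_le_mul_of_nonneg_left (Real.sqrt_le_sqrt (second_moment ψ hψ d A lam hlam))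
            (Real.sqrt_nonneg _)
      _ ≤ Real.sqrt E.card
            * (2 * (Fintype.card F : ℝ) ^ (((d : ℝ) + 1) / 2) * Real.sqrt A.card) :=
          mul_le_mul_of_nonneg_left (hnum_lemma _ hq0 d _) (Real.sqrt_nonneg _)
  have hpow : (Fintype.card F : ℝ) ^ (((d : ℝ) + 1) / 2)
      = (Fintype.card F : ℝ) * (Fintype.card F : ℝ) ^ (((d : ℝ) - 1) / 2) := by
    rw [show ((Fintype.card F : ℝ)) * (Fintype.card F : ℝ) ^ (((d : ℝ) - 1) / 2)
        = (Fintype.card F : ℝ) ^ (1:ℝ) * (Fintype.card F : ℝ) ^ (((d : ℝ) - 1) / 2) by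
      rw [Real.rpow_one], ← Real.rpow_add hq0]
    congr 1
    ring
  rw [hpow] at bound
  rw [← mul_le_mul_iff_right₀ hq0]
  calc (Fintype.card F : ℝ) * |R| ≤ Real.sqrt E.card
        * (2 * ((Fintype.card F : ℝ) * (Fintype.card F : ℝ) ^ (((d : ℝ) - 1) / 2))
            * Real.sqrt A.card) := bound
    _ = (Fintype.card F : ℝ) * (2 * (Fintype.card F : ℝ) ^ (((d : ℝ) - 1) / 2)
          * Real.sqrt E.card * Real.sqrt A.card) := by ring

end DotProdAux

open Finset

theorem stmt_0 :
    ∃ C : ℝ, 0 < C ∧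
      ∀ (F : Type) [Field F] [Fintype F] [DecidableEq F] (d : ℕ)
        (E A : Finset (Fin d → F)) (lam : F), lam ≠ 0 →
        |((((E ×ˢ A).filter (fun p => ∑ i, p.1 i * p.2 i = lam)).card : ℝ)
            - (E.card : ℝ) * A.card / Fintype.card F)|
          ≤ C * (Fintype.card F : ℝ) ^ (((d : ℝ) - 1) / 2)
              * Real.sqrt E.card * Real.sqrt A.card := by
  exact ⟨2, by norm_num, fun F _ _ _ d E A lam hlam => DotProdAux.main d E A lam hlam⟩
end

section
/- Let E, F ⊆ 𝔽_q^d and let N be the number of quadruples (x₁, x₂, y₁, y₂) ∈ E × E × F × F such that x₁·y₁ = x₂·y₂. Then |N − |E|²|F|²/q| ≤ C · q^d · |E| · |F| for some absolute constant C. -/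
open Finset

def dp {F : Type} [Semiring F] {d : ℕ} (x y : Fin d → F) : F := ∑ i, x i * y i

lemma count_lin {K : Type} [Field K] [Fintype K] [DecidableEq K] {d : ℕ}
    {v : Fin d → K} (hv : v ≠ 0) :
    (univ.filter (fun x : Fin d → K => ∑ i, x i * v i = 0)).card * Fintype.card K
      = Fintype.card K ^ d := by
  obtain ⟨i, hi⟩ : ∃ i, v i ≠ 0 := by
    by_contra h; push_neg at h; exact hv (funext h)
  let φ : (Fin d → K) →ₗ[K] K :=
    { toFun := fun x => ∑ j, x j * v j
      map_add' := fun a b => by simp [add_mul, Finset.sum_add_distrib]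
      map_smul' := fun c a => by simp [Finset.mul_sum, mul_assoc] }
  have hsurj : Function.Surjective φ := by
    intro c
    refine ⟨Pi.single i (c / v i), ?_⟩
    simp [φ, Pi.single_apply, ite_mul, Finset.sum_ite_eq', div_mul_cancel₀ _ hi]
  have hcard : Nat.card (Fin d → K)
      = Nat.card (LinearMap.ker φ) * Nat.card ((Fin d → K) ⧸ LinearMap.ker φ) :=
    Submodule.card_eq_card_quotient_mul_card _
  have hquot : Nat.card ((Fin d → K) ⧸ LinearMap.ker φ) = Fintype.card K :=
    (Nat.card_congr (φ.quotKerEquivOfSurjective hsurj).toEquiv).trans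
      Nat.card_eq_fintype_card
  have hker : Nat.card (LinearMap.ker φ)
      = (univ.filter (fun x : Fin d → K => ∑ i, x i * v i = 0)).card := by
    classical
    rw [Nat.card_eq_fintype_card, ← Fintype.card_subtype]
    apply Fintype.card_congr
    apply Equiv.subtypeEquivRight
    intro x
    simp [φ, LinearMap.mem_ker]
  have hdom : Nat.card (Fin d → K) = Fintype.card K ^ d := by
    simp [Nat.card_eq_fintype_card]
  rw [hdom, hker, hquot] at hcard
  exact hcard.symm

theorem stmt_1 :
    ∃ C : ℝ, 0 < C ∧
      ∀ (F : Type) [Field F] [Fintype F] [DecidableEq F] (d : ℕ)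
        (E A : Finset (Fin d → F)),
        |(((( (E ×ˢ E) ×ˢ (A ×ˢ A)).filter
              (fun p => ∑ i, p.1.1 i * p.2.1 i = ∑ i, p.1.2 i * p.2.2 i)).card : ℝ)
            - (E.card : ℝ) ^ 2 * (A.card : ℝ) ^ 2 / Fintype.card F)|
          ≤ C * (Fintype.card F : ℝ) ^ d * E.card * A.card := by
  refine ⟨1, one_pos, ?_⟩
  intro F _ _ _ d E A
  classical
  set q : ℝ := (Fintype.card F : ℝ) with hq_def
  have hq0 : (0:ℝ) < q := by rw [hq_def]; exact_mod_cast Fintype.card_pos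
  have hqne : q ≠ 0 := ne_of_gt hq0
  set f : F → ℝ := fun t => ∑ x ∈ E, ∑ y ∈ A, if dp x y = t then (1:ℝ) else 0 with hf
  set m : ℝ := (E.card : ℝ) * A.card with hm
  set N : ℝ := ((((E ×ˢ E) ×ˢ (A ×ˢ A)).filter
        (fun p => ∑ i, p.1.1 i * p.2.1 i = ∑ i, p.1.2 i * p.2.2 i)).card : ℝ) with hNdef
  set g : (Fin d → F) → F → ℝ :=
    fun x t => ∑ y ∈ A, ((if dp x y = t then (1:ℝ) else 0) - 1/q) with hg
  set D : F → ℝ := fun t => f t - m / q with hD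
  -- delta expansion
  have key : ∀ a b : F, (if a = b then (1:ℝ) else 0)
      = ∑ t : F, (if a = t then (1:ℝ) else 0) * (if b = t then 1 else 0) := by
    intro a b
    simp only [ite_mul, one_mul, zero_mul, Finset.sum_ite_eq, Finset.mem_univ, if_true]
    by_cases hab : a = b <;> simp [hab, eq_comm]
  have hN : ∑ t : F, f t ^ 2 = N := by
    have expand : ∀ t : F, f t ^ 2 = ∑ x₁ ∈ E, ∑ x₂ ∈ E, ∑ y₁ ∈ A, ∑ y₂ ∈ A,
        (if dp x₁ y₁ = t then (1:ℝ) else 0) * (if dp x₂ y₂ = t then 1 else 0) := by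
      intro t
      rw [sq, hf]
      rw [Finset.sum_mul_sum]
      exact Finset.sum_congr rfl fun x₁ _ => Finset.sum_congr rfl fun x₂ _ =>
        Finset.sum_mul_sum _ _ _ _
    calc ∑ t : F, f t ^ 2
        = ∑ t : F, ∑ x₁ ∈ E, ∑ x₂ ∈ E, ∑ y₁ ∈ A, ∑ y₂ ∈ A,
            (if dp x₁ y₁ = t then (1:ℝ) else 0) * (if dp x₂ y₂ = t then 1 else 0) :=
          Finset.sum_congr rfl fun t _ => expand t
      _ = ∑ x₁ ∈ E, ∑ x₂ ∈ E, ∑ y₁ ∈ A, ∑ y₂ ∈ A, ∑ t : F,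
            (if dp x₁ y₁ = t then (1:ℝ) else 0) * (if dp x₂ y₂ = t then 1 else 0) := by
          rw [Finset.sum_comm]
          refine Finset.sum_congr rfl fun x₁ _ => ?_
          rw [Finset.sum_comm]
          refine Finset.sum_congr rfl fun x₂ _ => ?_
          rw [Finset.sum_comm]
          refine Finset.sum_congr rfl fun y₁ _ => ?_
          rw [Finset.sum_comm]
      _ = ∑ x₁ ∈ E, ∑ x₂ ∈ E, ∑ y₁ ∈ A, ∑ y₂ ∈ A,
            (if dp x₁ y₁ = dp x₂ y₂ then (1:ℝ) else 0) :=
          Finset.sum_congr rfl fun _ _ => Finset.sum_congr rfl fun _ _ =>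
            Finset.sum_congr rfl fun _ _ => Finset.sum_congr rfl fun _ _ => (key _ _).symm
      _ = N := by
          rw [hNdef, Finset.card_filter]
          push_cast
          simp only [Finset.sum_product]
          simp only [dp]
          congr!
  have hfsum : ∑ t : F, f t = m := by
    have : ∀ (x y : Fin d → F), ∑ t : F, (if dp x y = t then (1:ℝ) else 0) = 1 := by
      intro x y; simp [Finset.sum_ite_eq]
    calc ∑ t : F, f t = ∑ x ∈ E, ∑ y ∈ A, ∑ t : F, (if dp x y = t then (1:ℝ) else 0) := by
          rw [hf, Finset.sum_comm]
          exact Finset.sum_congr rfl fun x _ => Finset.sum_comm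
      _ = ∑ x ∈ E, ∑ y ∈ A, (1:ℝ) := by
          exact Finset.sum_congr rfl fun x _ => Finset.sum_congr rfl fun y _ => this x y
      _ = m := by simp [hm]
  have h1 : ∑ t : F, D t ^ 2 = (∑ t : F, f t ^ 2) - m ^ 2 / q := by
    have e1 : ∀ t : F, D t ^ 2 = f t ^ 2 - 2 * (m / q) * f t + (m / q) ^ 2 := by
      intro t; rw [hD]; ring
    calc ∑ t : F, D t ^ 2
        = ∑ t : F, (f t ^ 2 - 2 * (m / q) * f t + (m / q) ^ 2) :=
          Finset.sum_congr rfl fun t _ => e1 t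
      _ = (∑ t : F, f t ^ 2) - 2 * (m / q) * (∑ t : F, f t)
            + (Fintype.card F : ℝ) * (m / q) ^ 2 := by
          rw [Finset.sum_add_distrib, Finset.sum_sub_distrib, ← Finset.mul_sum]
          simp [Finset.sum_const, Finset.card_univ, nsmul_eq_mul]
      _ = (∑ t : F, f t ^ 2) - m ^ 2 / q := by
          rw [hfsum, ← hq_def]
          field_simp
          ring
  have h2 : ∀ t : F, D t = ∑ x ∈ E, g x t := by
    intro t
    have : ∑ x ∈ E, g x t
        = (∑ x ∈ E, ∑ y ∈ A, if dp x y = t then (1:ℝ) else 0)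
          - (E.card : ℝ) * ((A.card : ℝ) * (1/q)) := by
      rw [hg]
      rw [Finset.sum_congr rfl (fun x (_ : x ∈ E) => Finset.sum_sub_distrib
        (f := fun y => if dp x y = t then (1:ℝ) else 0) (g := fun _ => 1/q))]
      rw [Finset.sum_sub_distrib]
      simp [Finset.sum_const, nsmul_eq_mul, Finset.mul_sum]
    rw [this, hD, hf, hm]
    ring
  have h3 : ∀ t : F, D t ^ 2 ≤ (E.card : ℝ) * ∑ x : Fin d → F, g x t ^ 2 := by
    intro t
    rw [h2 t]
    calc (∑ x ∈ E, g x t) ^ 2 ≤ (E.card : ℝ) * ∑ x ∈ E, g x t ^ 2 :=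
          sq_sum_le_card_mul_sum_sq
      _ ≤ (E.card : ℝ) * ∑ x : Fin d → F, g x t ^ 2 := by
          refine mul_le_mul_of_nonneg_left ?_ (Nat.cast_nonneg _)
          exact Finset.sum_le_sum_of_subset_of_nonneg (Finset.subset_univ E)
            (fun x _ _ => sq_nonneg _)
  have inner_t : ∀ a b : F,
      ∑ t : F, ((if a = t then (1:ℝ) else 0) - 1/q) * ((if b = t then 1 else 0) - 1/q)
        = (if a = b then (1:ℝ) else 0) - 1/q := by
    intro a b
    have e2 : ∑ t : F, (if a = t then (1:ℝ) else 0) = 1 := by simp [Finset.sum_ite_eq]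
    have e3 : ∑ t : F, (if b = t then (1:ℝ) else 0) = 1 := by simp [Finset.sum_ite_eq]
    calc ∑ t : F, ((if a = t then (1:ℝ) else 0) - 1/q) * ((if b = t then 1 else 0) - 1/q)
        = ∑ t : F, ((if a = t then (1:ℝ) else 0) * (if b = t then 1 else 0)
            - (1/q) * (if a = t then (1:ℝ) else 0)
            - (1/q) * (if b = t then (1:ℝ) else 0) + (1/q)^2) :=
          Finset.sum_congr rfl fun t _ => by ring
      _ = (if a = b then (1:ℝ) else 0) - (1/q) * 1 - (1/q) * 1
            + (Fintype.card F : ℝ) * (1/q)^2 := by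
          rw [Finset.sum_add_distrib, Finset.sum_sub_distrib, Finset.sum_sub_distrib,
            ← key, ← Finset.mul_sum, e2, ← Finset.mul_sum, e3]
          simp [Finset.sum_const, Finset.card_univ, nsmul_eq_mul]
      _ = (if a = b then (1:ℝ) else 0) - 1/q := by
          rw [← hq_def]
          field_simp
          ring
  have count_ne : ∀ y y' : Fin d → F, y ≠ y' →
      ((univ.filter (fun x : Fin d → F => dp x y = dp x y')).card : ℝ) * q = q ^ d := by
    intro y y' hyy'
    have hv : y - y' ≠ 0 := sub_ne_zero.mpr hyy'
    have hpred : ∀ x : Fin d → F, (dp x y = dp x y') ↔ (∑ i, x i * (y - y') i = 0) := by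
      intro x
      rw [dp, dp, ← sub_eq_zero, ← Finset.sum_sub_distrib]
      constructor <;> intro h <;> [skip; skip] <;>
        · convert h using 2 with i
          simp [Pi.sub_apply, mul_sub]
    have : (univ.filter (fun x : Fin d → F => dp x y = dp x y'))
        = (univ.filter (fun x : Fin d → F => ∑ i, x i * (y - y') i = 0)) := by
      apply Finset.filter_congr
      intro x _
      simp [hpred x]
    rw [this, hq_def]
    exact_mod_cast count_lin hv
  have sum_x : ∀ y y' : Fin d → F,
      ∑ x : Fin d → F, ((if dp x y = dp x y' then (1:ℝ) else 0) - 1/q)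
        = if y = y' then q ^ d - q ^ d / q else 0 := by
    intro y y'
    have hcu : ((Fintype.card (Fin d → F) : ℝ)) = q ^ d := by
      rw [hq_def]; simp
    have split : ∑ x : Fin d → F, ((if dp x y = dp x y' then (1:ℝ) else 0) - 1/q)
        = ((univ.filter (fun x : Fin d → F => dp x y = dp x y')).card : ℝ)
          - q ^ d * (1/q) := by
      rw [Finset.sum_sub_distrib, Finset.sum_boole]
      simp [Finset.sum_const, Finset.card_univ, nsmul_eq_mul, hcu]
      exact Or.inl (by rw [hq_def])
    by_cases hyy' : y = y'
    · subst hyy'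
      rw [split, if_pos rfl]
      have : (univ.filter (fun x : Fin d → F => dp x y = dp x y)) = univ := by
        simp
      rw [this, Finset.card_univ, hcu]
      ring
    · rw [split, if_neg hyy']
      have : ((univ.filter (fun x : Fin d → F => dp x y = dp x y')).card : ℝ)
          = q ^ d / q := by
        rw [eq_div_iff hqne]; exact count_ne y y' hyy'
      rw [this]
      ring
  have h4 : ∑ t : F, ∑ x : Fin d → F, g x t ^ 2 ≤ q ^ d * (A.card : ℝ) := by
    have hc0 : (0:ℝ) ≤ q ^ d / q := by positivity
    calc ∑ t : F, ∑ x : Fin d → F, g x t ^ 2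
        = ∑ x : Fin d → F, ∑ t : F, g x t ^ 2 := Finset.sum_comm
      _ = ∑ x : Fin d → F, ∑ y ∈ A, ∑ y' ∈ A,
            ((if dp x y = dp x y' then (1:ℝ) else 0) - 1/q) := by
          refine Finset.sum_congr rfl fun x _ => ?_
          calc ∑ t : F, g x t ^ 2
              = ∑ t : F, ∑ y ∈ A, ∑ y' ∈ A,
                  ((if dp x y = t then (1:ℝ) else 0) - 1/q)
                  * ((if dp x y' = t then (1:ℝ) else 0) - 1/q) := by
                refine Finset.sum_congr rfl fun t _ => ?_
                rw [hg, sq]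
                exact Finset.sum_mul_sum _ _ _ _
            _ = ∑ y ∈ A, ∑ y' ∈ A, ∑ t : F,
                  ((if dp x y = t then (1:ℝ) else 0) - 1/q)
                  * ((if dp x y' = t then (1:ℝ) else 0) - 1/q) := by
                rw [Finset.sum_comm]
                exact Finset.sum_congr rfl fun y _ => Finset.sum_comm
            _ = ∑ y ∈ A, ∑ y' ∈ A,
                  ((if dp x y = dp x y' then (1:ℝ) else 0) - 1/q) :=
                Finset.sum_congr rfl fun y _ => Finset.sum_congr rfl fun y' _ =>
                  inner_t _ _
      _ = ∑ y ∈ A, ∑ y' ∈ A, ∑ x : Fin d → F,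
            ((if dp x y = dp x y' then (1:ℝ) else 0) - 1/q) := by
          rw [Finset.sum_comm]
          exact Finset.sum_congr rfl fun y _ => Finset.sum_comm
      _ = ∑ y ∈ A, ∑ y' ∈ A, (if y = y' then q ^ d - q ^ d / q else 0) :=
          Finset.sum_congr rfl fun y _ => Finset.sum_congr rfl fun y' _ => sum_x y y'
      _ = ∑ y ∈ A, (q ^ d - q ^ d / q) := by
          refine Finset.sum_congr rfl fun y hy => ?_
          rw [Finset.sum_ite_eq A y (fun _ => q ^ d - q ^ d / q), if_pos hy]
      _ = (A.card : ℝ) * (q ^ d - q ^ d / q) := by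
          simp [Finset.sum_const, nsmul_eq_mul]
          ring
      _ ≤ (A.card : ℝ) * q ^ d := by
          refine mul_le_mul_of_nonneg_left ?_ (Nat.cast_nonneg _)
          linarith
      _ = q ^ d * (A.card : ℝ) := mul_comm _ _
  -- assemble
  have hNm : N - m ^ 2 / q = ∑ t : F, D t ^ 2 := by rw [h1, hN]
  have hDnn : (0:ℝ) ≤ ∑ t : F, D t ^ 2 :=
    Finset.sum_nonneg fun t _ => sq_nonneg _
  have hmm : (E.card : ℝ) ^ 2 * (A.card : ℝ) ^ 2 = m ^ 2 := by rw [hm]; ring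
  rw [hmm]
  rw [abs_of_nonneg (by rw [hNm]; exact hDnn)]
  rw [hNm]
  calc ∑ t : F, D t ^ 2
      ≤ ∑ t : F, (E.card : ℝ) * ∑ x : Fin d → F, g x t ^ 2 :=
        Finset.sum_le_sum fun t _ => h3 t
    _ = (E.card : ℝ) * ∑ t : F, ∑ x : Fin d → F, g x t ^ 2 :=
        (Finset.mul_sum _ _ _).symm
    _ ≤ (E.card : ℝ) * (q ^ d * (A.card : ℝ)) :=
        mul_le_mul_of_nonneg_left h4 (Nat.cast_nonneg _)
    _ = 1 * q ^ d * (E.card : ℝ) * (A.card : ℝ) := by ring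
end

section
/- Let χ be a nontrivial additive character of 𝔽_q and E, F ⊆ 𝔽_q^d. Then |Σ_{x₁,x₂∈E} Σ_{y₁,y₂∈F} Σ_{t∈𝔽_q} χ(t·(x₁·y₁ − x₂·y₂)) − |E|²|F|²| ≤ C · q^(d+1) · |E| · |F| for some absolute constant C. -/
open Finset

/-- Old Mathlib `AddChar.IsNontrivial` (removed): some value differs from 1. -/
def AddChar.IsNontrivial {A M : Type*} [AddMonoid A] [Monoid M] (ψ : AddChar A M) : Prop :=
  ∃ a : A, ψ a ≠ 1

section aux

lemma sum_comm_univ {γ β M : Type*} [AddCommMonoid M] [Fintype β] (s : Finset γ) (g : γ → β → M) :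
    ∑ c ∈ s, ∑ t : β, g c t = ∑ t : β, ∑ c ∈ s, g c t := Finset.sum_comm

variable {F : Type} [Field F] [Fintype F] [DecidableEq F] {χ : AddChar F ℂ}

lemma addchar_map_sum {ι : Type*} (χ : AddChar F ℂ) (s : Finset ι) (f : ι → F) :
    χ (∑ i ∈ s, f i) = ∏ i ∈ s, χ (f i) := by
  classical
  induction s using Finset.cons_induction with
  | empty => simp
  | cons a s ha ih => rw [Finset.sum_cons, Finset.prod_cons, AddChar.map_add_eq_mul, ih]

lemma sum_char_mul (hχ : χ.IsNontrivial) (s : F) :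
    ∑ t : F, χ (t * s) = if s = 0 then (Fintype.card F : ℂ) else 0 := by
  rw [AddChar.sum_mulShift s (AddChar.IsPrimitive.of_ne_one (by rintro rfl; obtain ⟨a, ha⟩ := hχ; exact ha (by simp)))]
  split_ifs <;> simp

lemma sum_vec (hχ : χ.IsNontrivial) {d : ℕ} (c : Fin d → F) :
    ∑ x : Fin d → F, χ (∑ i, x i * c i) =
      if c = 0 then ((Fintype.card F : ℂ)) ^ d else 0 := by
  simp_rw [addchar_map_sum]
  rw [← Fintype.piFinset_univ,
    Finset.sum_prod_piFinset (univ : Finset F) (fun (i : Fin d) (a : F) => χ (a * c i))]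
  simp_rw [sum_char_mul hχ]
  by_cases hc : c = 0
  · simp [hc]
  · rw [if_neg hc]
    obtain ⟨i, hi⟩ : ∃ i, c i ≠ 0 := by
      by_contra h; push_neg at h; exact hc (funext h)
    exact Finset.prod_eq_zero (Finset.mem_univ i) (if_neg hi)

end aux

theorem stmt_2 :
    ∃ C : ℝ, 0 < C ∧
      ∀ (F : Type) [Field F] [Fintype F] [DecidableEq F] (d : ℕ)
        (χ : AddChar F ℂ), χ.IsNontrivial →
        ∀ (E A : Finset (Fin d → F)),
        ‖
            ((∑ x₁ ∈ E, ∑ x₂ ∈ E, ∑ y₁ ∈ A, ∑ y₂ ∈ A, ∑ t : F,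
                χ (t * (∑ i, x₁ i * y₁ i - ∑ i, x₂ i * y₂ i)))
              - (E.card : ℂ) ^ 2 * (A.card : ℂ) ^ 2)‖
          ≤ C * (Fintype.card F : ℝ) ^ (d + 1) * E.card * A.card := by
  refine ⟨1, one_pos, ?_⟩
  intro F _ _ _ d χ hχ E A
  set q := Fintype.card F with hq
  -- inner exponential sum
  set S : F → ℂ := fun t => ∑ x ∈ E, ∑ y ∈ A, χ (t * ∑ i, x i * y i) with hS
  -- Step 1: rewrite the big sum
  have step1 : (∑ x₁ ∈ E, ∑ x₂ ∈ E, ∑ y₁ ∈ A, ∑ y₂ ∈ A, ∑ t : F,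
        χ (t * (∑ i, x₁ i * y₁ i - ∑ i, x₂ i * y₂ i)))
      = ∑ t : F, S t * (starRingEnd ℂ) (S t) := by
    have hterm : ∀ (t : F) (x₁ x₂ y₁ y₂ : Fin d → F),
        χ (t * (∑ i, x₁ i * y₁ i - ∑ i, x₂ i * y₂ i))
          = χ (t * ∑ i, x₁ i * y₁ i) * (starRingEnd ℂ) (χ (t * ∑ i, x₂ i * y₂ i)) := by
      intro t x₁ x₂ y₁ y₂
      rw [← AddChar.map_neg_eq_conj, ← AddChar.map_add_eq_mul]
      ring_nf
    simp_rw [hterm, hS, map_sum, Finset.sum_mul_sum, sum_comm_univ]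
  rw [step1]
  have hS0 : S 0 = (E.card : ℂ) * A.card := by
    simp [hS]
  have hsplit : (∑ t : F, S t * (starRingEnd ℂ) (S t)) - (E.card : ℂ) ^ 2 * (A.card : ℂ) ^ 2
      = ∑ t ∈ (univ : Finset F).erase 0, S t * (starRingEnd ℂ) (S t) := by
    rw [← Finset.add_sum_erase _ _ (Finset.mem_univ (0 : F)), hS0, map_mul,
      Complex.conj_natCast, Complex.conj_natCast]
    ring
  rw [hsplit]
  -- key bound for t ≠ 0
  have key : ∀ t : F, t ≠ 0 →
      ‖S t‖ ^ 2 ≤ (E.card : ℝ) * ((q : ℝ) ^ d * A.card) := by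
    intro t ht
    set T : (Fin d → F) → ℂ := fun x => ∑ y ∈ A, χ (t * ∑ i, x i * y i) with hT
    have hnormsq : ∑ x : Fin d → F, ‖T x‖ ^ 2 = (q : ℝ) ^ d * A.card := by
      have hC : ∑ x : Fin d → F, T x * (starRingEnd ℂ) (T x) = (q : ℂ) ^ d * A.card := by
        have hterm : ∀ x y₁ y₂ : Fin d → F,
            χ (t * ∑ i, x i * y₁ i) * (starRingEnd ℂ) (χ (t * ∑ i, x i * y₂ i))
              = χ (∑ i, x i * (t * (y₁ i - y₂ i))) := by
          intro x y₁ y₂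
          rw [← AddChar.map_neg_eq_conj, ← AddChar.map_add_eq_mul]
          congr 1
          rw [Finset.mul_sum, Finset.mul_sum, ← Finset.sum_neg_distrib, ← Finset.sum_add_distrib]
          exact Finset.sum_congr rfl fun i _ => by ring
        simp_rw [hT, map_sum, Finset.sum_mul_sum, hterm]
        rw [Finset.sum_comm]
        have hswap : ∀ y₁ : Fin d → F, (∑ x : Fin d → F, ∑ y₂ ∈ A, χ (∑ i, x i * (t * (y₁ i - y₂ i))))
            = ∑ y₂ ∈ A, ∑ x : Fin d → F, χ (∑ i, x i * (t * (y₁ i - y₂ i))) := fun _ => Finset.sum_comm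
        simp_rw [hswap, sum_vec hχ]
        have hzero : ∀ y₁ y₂ : Fin d → F, ((fun i => t * (y₁ i - y₂ i)) = 0) ↔ y₁ = y₂ := by
          intro y₁ y₂
          constructor
          · intro h
            funext i
            have := congrFun h i
            simp only [Pi.zero_apply, mul_eq_zero, sub_eq_zero] at this
            tauto
          · rintro rfl; funext i; simp
        simp only [hzero]
        rw [Finset.sum_congr rfl
          (fun y₁ _ => Finset.sum_ite_eq A y₁ (fun _ => ((Fintype.card F : ℂ)) ^ d))]
        rw [Finset.sum_congr rfl fun y hy => if_pos hy, Finset.sum_const, nsmul_eq_mul, hq]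
        ring
      have habs : ∀ z : ℂ, ((‖z‖ ^ 2 : ℝ) : ℂ) = z * (starRingEnd ℂ) z := fun z => by
        rw [Complex.sq_norm, Complex.mul_conj]
      have hcast : ((∑ x : Fin d → F, ‖T x‖ ^ 2 : ℝ) : ℂ)
          = (((q : ℝ) ^ d * (A.card : ℝ) : ℝ) : ℂ) := by
        calc ((∑ x : Fin d → F, ‖T x‖ ^ 2 : ℝ) : ℂ)
            = ∑ x : Fin d → F, ((‖T x‖ ^ 2 : ℝ) : ℂ) := by push_cast; rfl
          _ = ∑ x : Fin d → F, T x * (starRingEnd ℂ) (T x) :=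
              Finset.sum_congr rfl fun x _ => habs _
          _ = (q : ℂ) ^ d * A.card := hC
          _ = (((q : ℝ) ^ d * (A.card : ℝ) : ℝ) : ℂ) := by push_cast; ring
      exact_mod_cast hcast
    have h1 : ‖S t‖ ≤ ∑ x ∈ E, ‖T x‖ := by
      rw [hS]
      simpa [hT] using norm_sum_le E (fun x => T x)
    have h2 : (∑ x ∈ E, ‖T x‖) ^ 2 ≤ E.card * ∑ x ∈ E, ‖T x‖ ^ 2 :=
      sq_sum_le_card_mul_sum_sq
    have h3 : (∑ x ∈ E, ‖T x‖ ^ 2) ≤ ∑ x : Fin d → F, ‖T x‖ ^ 2 :=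
      Finset.sum_le_sum_of_subset_of_nonneg (Finset.subset_univ E)
        (fun _ _ _ => by positivity)
    calc ‖S t‖ ^ 2 ≤ (∑ x ∈ E, ‖T x‖) ^ 2 := by
          apply pow_le_pow_left₀ (norm_nonneg _) h1
      _ ≤ E.card * ∑ x ∈ E, ‖T x‖ ^ 2 := h2
      _ ≤ E.card * ∑ x : Fin d → F, ‖T x‖ ^ 2 := by
          apply mul_le_mul_of_nonneg_left h3 (by positivity)
      _ = (E.card : ℝ) * ((q : ℝ) ^ d * A.card) := by rw [hnormsq]
  -- final estimate
  have hbound : ‖∑ t ∈ (univ : Finset F).erase 0, S t * (starRingEnd ℂ) (S t)‖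
      ≤ ∑ t ∈ (univ : Finset F).erase 0, ‖S t‖ ^ 2 := by
    calc ‖∑ t ∈ (univ : Finset F).erase 0, S t * (starRingEnd ℂ) (S t)‖
        ≤ ∑ t ∈ (univ : Finset F).erase 0, ‖S t * (starRingEnd ℂ) (S t)‖ := by
          simpa using
            norm_sum_le ((univ : Finset F).erase 0) (fun t => S t * (starRingEnd ℂ) (S t))
      _ = ∑ t ∈ (univ : Finset F).erase 0, ‖S t‖ ^ 2 :=
          Finset.sum_congr rfl fun t _ => by rw [norm_mul, Complex.norm_conj, sq]
  refine le_trans hbound ?_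
  have hsum : ∑ t ∈ (univ : Finset F).erase 0, ‖S t‖ ^ 2
      ≤ ((univ : Finset F).erase 0).card * ((E.card : ℝ) * ((q : ℝ) ^ d * A.card)) := by
    refine le_trans (Finset.sum_le_sum fun t ht => key t (Finset.mem_erase.mp ht).1) ?_
    rw [Finset.sum_const, nsmul_eq_mul]
  refine le_trans hsum ?_
  have hcard : (((univ : Finset F).erase 0).card : ℝ) ≤ (q : ℝ) := by
    have : ((univ : Finset F).erase 0).card ≤ q := by
      calc ((univ : Finset F).erase 0).card ≤ (univ : Finset F).card := Finset.card_erase_le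
        _ = q := Finset.card_univ
    exact_mod_cast this
  calc (((univ : Finset F).erase 0).card : ℝ) * ((E.card : ℝ) * ((q : ℝ) ^ d * A.card))
      ≤ (q : ℝ) * ((E.card : ℝ) * ((q : ℝ) ^ d * A.card)) := by
        apply mul_le_mul_of_nonneg_right hcard (by positivity)
    _ = 1 * (q : ℝ) ^ (d + 1) * E.card * A.card := by ring
    _ ≤ 1 * (q : ℝ) ^ (d + 1) * E.card * A.card := le_refl _
end

section
/- Let E, F ⊆ 𝔽_q^d. The number of pairs (x,y) ∈ E × F with x·y = 0 is at most |E||F|/q + q^(d/2)·√(|E||F|). -/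
open Finset Matrix
set_option maxHeartbeats 1000000

lemma fiber_card {F : Type} [Field F] [Fintype F] [DecidableEq F] {d : ℕ}
    {W : Type} [AddCommGroup W] [Fintype W] [DecidableEq W]
    (f : (Fin d → F) → W) (hadd : ∀ a b, f (a + b) = f a + f b)
    (hs : Function.Surjective f) :
    (univ.filter fun y => f y = 0).card * Fintype.card W = Fintype.card F ^ d := by
  have hcard : Fintype.card F ^ d = ∑ w : W, (univ.filter fun y => f y = w).card := by
    have : Fintype.card F ^ d = Fintype.card (Fin d → F) := by
      simp [Fintype.card_fun]
    rw [this, ← Finset.card_univ]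
    exact Finset.card_eq_sum_card_fiberwise (fun y _ => mem_univ (f y))
  have hfib : ∀ w : W, (univ.filter fun y => f y = w).card
      = (univ.filter fun y => f y = 0).card := by
    intro w
    obtain ⟨yw, hyw⟩ := hs w
    apply Finset.card_bij' (fun y _ => y - yw) (fun y _ => y + yw)
    · intro y hy
      simp only [mem_filter, mem_univ, true_and] at hy ⊢
      have h2 := hadd (y - yw) yw
      rw [sub_add_cancel, hyw, hy] at h2
      simpa using h2.symm
    · intro y hy
      simp only [mem_filter, mem_univ, true_and] at hy ⊢
      rw [hadd, hy, hyw, zero_add]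
    · intro y _; exact sub_add_cancel y yw
    · intro y _; exact add_sub_cancel_right y yw
  rw [hcard]
  rw [Finset.sum_congr rfl (fun w _ => hfib w), Finset.sum_const, Finset.card_univ,
    smul_eq_mul, mul_comm]

lemma line_card {F : Type} [Field F] [Fintype F] [DecidableEq F] {d : ℕ}
    {x : Fin d → F} (hx : x ≠ 0) :
    (univ.filter fun y => x ⬝ᵥ y = 0).card * Fintype.card F = Fintype.card F ^ d := by
  apply fiber_card (fun y => x ⬝ᵥ y) (fun a b => dotProduct_add x a b)
  intro s
  obtain ⟨i, hi⟩ := Function.ne_iff.mp hx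
  simp only [Pi.zero_apply] at hi
  refine ⟨Pi.single i ((x i)⁻¹ * s), ?_⟩
  show x ⬝ᵥ _ = s
  rw [dotProduct_single]
  field_simp

lemma exists_dot_one {F : Type} [Field F] [Fintype F] [DecidableEq F] {d : ℕ}
    {x : Fin d → F} (hx : x ≠ 0) : ∃ y, x ⬝ᵥ y = 1 := by
  obtain ⟨i, hi⟩ := Function.ne_iff.mp hx
  simp only [Pi.zero_apply] at hi
  refine ⟨Pi.single i (x i)⁻¹, ?_⟩
  rw [dotProduct_single]
  field_simp

lemma plane_card {F : Type} [Field F] [Fintype F] [DecidableEq F] {d : ℕ}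
    {x x' : Fin d → F} (h1 : ∀ c : F, x' ≠ c • x) (h2 : ∀ c : F, x ≠ c • x') :
    (univ.filter fun y => x ⬝ᵥ y = 0 ∧ x' ⬝ᵥ y = 0).card * Fintype.card F ^ 2
      = Fintype.card F ^ d := by
  have hx : x ≠ 0 := by
    intro h; exact h2 0 (by simp [h])
  obtain ⟨y₀, hy₀⟩ := exists_dot_one hx
  -- find z with x ⬝ᵥ z = 0, x' ⬝ᵥ z = 1
  have hz : ∃ z, x ⬝ᵥ z = 0 ∧ x' ⬝ᵥ z = 1 := by
    by_contra hcon
    push_neg at hcon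
    have hker : ∀ z, x ⬝ᵥ z = 0 → x' ⬝ᵥ z = 0 := by
      intro z hz0
      by_contra hne
      exact (hcon ((x' ⬝ᵥ z)⁻¹ • z)) (by rw [dotProduct_smul, hz0, smul_eq_mul, mul_zero])
        (by rw [dotProduct_smul, smul_eq_mul, inv_mul_cancel₀ hne])
    apply h1 (x' ⬝ᵥ y₀)
    funext j
    have hxz : x ⬝ᵥ (Pi.single j 1 - (x j) • y₀) = 0 := by
      rw [dotProduct_sub, dotProduct_smul, dotProduct_single, hy₀, smul_eq_mul]
      ring
    have := hker _ hxz
    rw [dotProduct_sub, dotProduct_smul, dotProduct_single, smul_eq_mul, sub_eq_zero] at this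
    simpa [mul_comm] using this
  obtain ⟨z, hz1, hz2⟩ := hz
  set w := y₀ - (x' ⬝ᵥ y₀) • z with hw
  have hw1 : x ⬝ᵥ w = 1 := by
    rw [hw, dotProduct_sub, dotProduct_smul, hz1, hy₀, smul_eq_mul, mul_zero, sub_zero]
  have hw2 : x' ⬝ᵥ w = 0 := by
    rw [hw, dotProduct_sub, dotProduct_smul, hz2, smul_eq_mul, mul_one, sub_self]
  have key := fiber_card (W := F × F) (fun y => (x ⬝ᵥ y, x' ⬝ᵥ y))
    (fun a b => by simp [dotProduct_add, Prod.ext_iff])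
    (by
      rintro ⟨s, t⟩
      refine ⟨s • w + t • z, ?_⟩
      simp only [dotProduct_add, dotProduct_smul, hw1, hw2, hz1, hz2, smul_eq_mul,
        mul_one, mul_zero, add_zero, zero_add, Prod.mk.injEq]
      try exact ⟨rfl, rfl⟩)
  rw [Fintype.card_prod] at key
  rw [← key, sq]
  congr 1
  apply Finset.card_bij (fun y _ => y) <;> simp [Prod.ext_iff]



theorem stmt_3 (F : Type) [Field F] [Fintype F] [DecidableEq F] (d : ℕ)
    (E A : Finset (Fin d → F)) :
    (((E ×ˢ A).filter (fun p => ∑ i, p.1 i * p.2 i = 0)).card : ℝ)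
      ≤ (E.card : ℝ) * A.card / Fintype.card F
        + (Fintype.card F : ℝ) ^ ((d : ℝ) / 2) * Real.sqrt ((E.card : ℝ) * A.card) := by
  classical
  set q : ℕ := Fintype.card F with hqdef
  have hq1 : 1 ≤ q := Fintype.card_pos
  have hqR : (1:ℝ) ≤ (q:ℝ) := by exact_mod_cast hq1
  have hq0 : (0:ℝ) < (q:ℝ) := by linarith
  set e : ℝ := (E.card : ℝ) with he
  set a : ℝ := (A.card : ℝ) with ha
  have he0 : 0 ≤ e := by positivity
  have ha0 : 0 ≤ a := by positivity
  set Q : ℝ := (q:ℝ) ^ d with hQ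
  have hQ0 : 0 ≤ Q := by positivity
  set n : (Fin d → F) → ℕ := fun y => (E.filter fun x => x ⬝ᵥ y = 0).card with hn
  set m : (Fin d → F) → ℕ := fun x => (univ.filter fun y => x ⬝ᵥ y = 0).card with hm
  set K : (Fin d → F) → (Fin d → F) → ℕ :=
    fun x x' => (univ.filter fun y => x ⬝ᵥ y = 0 ∧ x' ⬝ᵥ y = 0).card with hK
  set εR : ℝ := if (0 : Fin d → F) ∈ E then 1 else 0 with hε
  have hε0 : 0 ≤ εR := by rw [hε]; split <;> norm_num
  have hε1 : εR = 0 ∨ εR = 1 := by rw [hε]; split <;> simp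
  have hcardU : (Finset.univ : Finset (Fin d → F)).card = q ^ d := by
    rw [Finset.card_univ]; simp [Fintype.card_fun, hqdef]
  -- Step 1 : count = ∑ y ∈ A, n y
  have hN : ((E ×ˢ A).filter (fun p => ∑ i, p.1 i * p.2 i = 0)).card = ∑ y ∈ A, n y := by
    rw [Finset.card_filter, Finset.sum_product_right]
    refine Finset.sum_congr rfl fun y _ => ?_
    have : n y = ∑ x ∈ E, (if x ⬝ᵥ y = 0 then 1 else 0) := Finset.card_filter _ _
    rw [this]
    rfl
  -- swap sums
  have hS : ∑ y : Fin d → F, n y = ∑ x ∈ E, m x := by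
    simp only [hn, hm, Finset.card_filter]
    exact Finset.sum_comm
  have hT : ∑ y : Fin d → F, n y ^ 2 = ∑ x ∈ E, ∑ x' ∈ E, K x x' := by
    have h1 : ∀ y : Fin d → F, n y ^ 2
        = ∑ x ∈ E, ∑ x' ∈ E, (if x ⬝ᵥ y = 0 ∧ x' ⬝ᵥ y = 0 then 1 else 0) := by
      intro y
      have hny : n y = ∑ x ∈ E, (if x ⬝ᵥ y = 0 then 1 else 0) := Finset.card_filter _ _
      rw [sq, hny, Finset.sum_mul_sum]
      refine Finset.sum_congr rfl fun x _ => Finset.sum_congr rfl fun x' _ => ?_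
      split_ifs with h1 h2 h3 <;> simp_all
    simp only [h1, hK, Finset.card_filter]
    rw [Finset.sum_comm]
    refine Finset.sum_congr rfl fun x _ => Finset.sum_comm
  -- per element values
  have hm_ne : ∀ x : Fin d → F, x ≠ 0 → ((m x : ℝ)) * q = Q := by
    intro x hx
    have h2 : m x * q = q ^ d := line_card hx
    have h3 := congrArg (Nat.cast : ℕ → ℝ) h2
    push_cast at h3
    rw [hQ]
    exact h3
  have hm_zero : (m 0 : ℝ) = Q := by
    have : m 0 = q ^ d := by
      rw [hm]
      simp only [zero_dotProduct, eq_self_iff_true, Finset.filter_true]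
      simpa using hcardU
    rw [this]; push_cast; rfl
  -- S identity
  have hScast : (q:ℝ) * (∑ y : Fin d → F, (n y : ℝ)) = e * Q + εR * ((q:ℝ) * Q - Q) := by
    have hScast0 : (∑ y : Fin d → F, (n y : ℝ)) = ∑ x ∈ E, (m x : ℝ) := by
      exact_mod_cast congrArg (Nat.cast : ℕ → ℝ) hS
    rw [hScast0, Finset.mul_sum]
    have : ∀ x ∈ E, (q:ℝ) * (m x : ℝ) = Q + (if x = 0 then (q:ℝ) * Q - Q else 0) := by
      intro x _
      by_cases hx : x = 0
      · subst hx; rw [hm_zero, if_pos rfl]; ring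
      · rw [if_neg hx, add_zero, mul_comm]; exact hm_ne x hx
    rw [Finset.sum_congr rfl this, Finset.sum_add_distrib, Finset.sum_const,
      Finset.sum_ite_eq' E 0 (fun _ => (q:ℝ) * Q - Q)]
    rw [hε, he]
    split <;> simp <;> ring
  -- P and T bound
  set P : ℝ := ∑ x ∈ E, ∑ x' ∈ E, (if (∃ c : F, x' = c • x ∨ x = c • x') then (1:ℝ) else 0)
    with hPdef
  have hεsum : ∑ x ∈ E, (if x = (0 : Fin d → F) then (1:ℝ) else 0) = εR := by
    rw [Finset.sum_ite_eq' E (0 : Fin d → F) (fun _ => (1:ℝ))]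
  have hTcast : (q:ℝ)^2 * (∑ x ∈ E, ∑ x' ∈ E, (K x x' : ℝ))
      ≤ Q * e^2 + ((q:ℝ) * Q - Q) * P + ((q:ℝ)^2 * Q - (q:ℝ) * Q) * εR := by
    have hqQ : 0 ≤ (q:ℝ) * Q - Q := by nlinarith
    have key : ∀ x ∈ E, ∀ x' ∈ E, (q:ℝ)^2 * (K x x' : ℝ)
        ≤ Q + ((q:ℝ) * Q - Q) * (if (∃ c : F, x' = c • x ∨ x = c • x') then (1:ℝ) else 0)
          + ((q:ℝ)^2 * Q - (q:ℝ) * Q) * (if x = 0 ∧ x' = 0 then (1:ℝ) else 0) := by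
      intro x _ x' _
      by_cases hdep : ∃ c : F, x' = c • x ∨ x = c • x'
      · by_cases hzz : x = 0 ∧ x' = 0
        · have hK1 : K x x' ≤ q ^ d := by
            rw [← hcardU]; exact Finset.card_le_card (Finset.filter_subset _ _)
          have hK2 : (K x x' : ℝ) ≤ Q := by rw [hQ]; exact_mod_cast hK1
          rw [if_pos hdep, if_pos hzz]
          nlinarith [sq_nonneg ((q:ℝ) - 1)]
        · have hKq : (K x x' : ℝ) * q ≤ Q := by
            rcases not_and_or.mp hzz with hx | hx
            · have hsub : K x x' ≤ m x := Finset.card_le_card (by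
                intro y hy
                simp only [Finset.mem_filter] at hy ⊢
                exact ⟨hy.1, hy.2.1⟩)
              have hc : (K x x' : ℝ) ≤ (m x : ℝ) := by exact_mod_cast hsub
              nlinarith [hm_ne x hx]
            · have hsub : K x x' ≤ m x' := Finset.card_le_card (by
                intro y hy
                simp only [Finset.mem_filter] at hy ⊢
                exact ⟨hy.1, hy.2.2⟩)
              have hc : (K x x' : ℝ) ≤ (m x' : ℝ) := by exact_mod_cast hsub
              nlinarith [hm_ne x' hx]
          rw [if_pos hdep, if_neg hzz]
          calc (q:ℝ)^2 * (K x x' : ℝ) = (q:ℝ) * ((K x x' : ℝ) * q) := by ring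
            _ ≤ (q:ℝ) * Q := by
                have := mul_le_mul_of_nonneg_left hKq (le_of_lt hq0)
                linarith
            _ = Q + ((q:ℝ) * Q - Q) * 1 + ((q:ℝ)^2 * Q - (q:ℝ) * Q) * 0 := by ring
      · have hzz : ¬ (x = 0 ∧ x' = 0) := by
          rintro ⟨h1, h2⟩; exact hdep ⟨0, Or.inl (by rw [h1, h2, smul_zero])⟩
        push_neg at hdep
        have hKq := plane_card (fun c => (hdep c).1) (fun c => (hdep c).2)
        rw [← hqdef] at hKq
        have hKq2 : K x x' * q ^ 2 = q ^ d := hKq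
        have hKq3 : (K x x' : ℝ) * (q:ℝ)^2 = Q := by
          rw [hQ]; exact_mod_cast hKq2
        rw [if_neg (by push_neg; exact hdep), if_neg hzz]
        linarith [hKq3]
    calc (q:ℝ)^2 * (∑ x ∈ E, ∑ x' ∈ E, (K x x' : ℝ))
        = ∑ x ∈ E, ∑ x' ∈ E, (q:ℝ)^2 * (K x x' : ℝ) := by
          rw [Finset.mul_sum]
          exact Finset.sum_congr rfl fun x _ => Finset.mul_sum _ _ _
      _ ≤ ∑ x ∈ E, ∑ x' ∈ E,
          (Q + ((q:ℝ) * Q - Q) * (if (∃ c : F, x' = c • x ∨ x = c • x') then (1:ℝ) else 0)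
            + ((q:ℝ)^2 * Q - (q:ℝ) * Q) * (if x = 0 ∧ x' = 0 then (1:ℝ) else 0)) := by
          refine Finset.sum_le_sum fun x hx => Finset.sum_le_sum fun x' hx' => key x hx x' hx'
      _ = Q * e^2 + ((q:ℝ) * Q - Q) * P + ((q:ℝ)^2 * Q - (q:ℝ) * Q) * (εR * εR) := by
          simp only [Finset.sum_add_distrib, ← Finset.mul_sum, Finset.sum_const, smul_eq_mul]
          have hz : ∑ x ∈ E, ∑ x' ∈ E, (if x = 0 ∧ x' = 0 then (1:ℝ) else 0) = εR * εR := by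
            have inner : ∀ x : Fin d → F, (∑ x' ∈ E, if x = 0 ∧ x' = 0 then (1:ℝ) else 0)
                = if x = (0 : Fin d → F) then εR else 0 := by
              intro x
              by_cases hx : x = 0
              · simp only [hx, eq_self_iff_true, true_and, if_true]
                rw [hε]
                exact Finset.sum_ite_eq' E (0 : Fin d → F) (fun _ => (1:ℝ))
              · simp [hx]
            rw [Finset.sum_congr rfl (fun x _ => inner x),
              Finset.sum_ite_eq' E (0 : Fin d → F) (fun _ => εR), hε]
            split <;> simp
          rw [hz, hPdef]
          push_cast [he]
          ring
      _ ≤ Q * e^2 + ((q:ℝ) * Q - Q) * P + ((q:ℝ)^2 * Q - (q:ℝ) * Q) * εR := by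
          have h2 : εR * εR = εR := by rcases hε1 with h | h <;> rw [h] <;> ring
          rw [h2]
  -- bound on P
  have hP : P ≤ (e - εR) * ((q:ℝ) - 1 + εR) + εR * e := by
    have hpx : ∀ x ∈ E, (∑ x' ∈ E, if (∃ c : F, x' = c • x ∨ x = c • x') then (1:ℝ) else 0)
        ≤ if x = (0 : Fin d → F) then e else ((q:ℝ) - 1 + εR) := by
      intro x _
      by_cases hx : x = 0
      · rw [if_pos hx]
        calc (∑ x' ∈ E, if (∃ c : F, x' = c • x ∨ x = c • x') then (1:ℝ) else 0)
            ≤ ∑ _x' ∈ E, (1:ℝ) := Finset.sum_le_sum fun x' _ => by split <;> norm_num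
          _ = e := by rw [Finset.sum_const, he]; simp
      · rw [if_neg hx]
        have hsubset : (E.filter fun x' => ∃ c : F, x' = c • x ∨ x = c • x')
            ⊆ insert (0 : Fin d → F) (((univ : Finset F).erase 0).image (fun c => c • x)) := by
          intro x' hx'
          obtain ⟨-, c, hc⟩ := Finset.mem_filter.mp hx'
          rcases hc with hc | hc
          · by_cases hc0 : c = 0
            · rw [hc, hc0, zero_smul]; exact Finset.mem_insert_self _ _
            · exact Finset.mem_insert_of_mem (Finset.mem_image.mpr
                ⟨c, Finset.mem_erase.mpr ⟨hc0, Finset.mem_univ c⟩, hc.symm⟩)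
          · have hc0 : c ≠ 0 := by rintro rfl; rw [zero_smul] at hc; exact hx hc
            have hx'eq : x' = c⁻¹ • x := by
              rw [hc, smul_smul, inv_mul_cancel₀ hc0, one_smul]
            exact Finset.mem_insert_of_mem (Finset.mem_image.mpr
              ⟨c⁻¹, Finset.mem_erase.mpr ⟨inv_ne_zero hc0, Finset.mem_univ _⟩, hx'eq.symm⟩)
        have himg : (((univ : Finset F).erase 0).image (fun c => c • x)).card ≤ q - 1 := by
          calc (((univ : Finset F).erase 0).image (fun c => c • x)).card
              ≤ ((univ : Finset F).erase 0).card := Finset.card_image_le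
            _ = q - 1 := by rw [Finset.card_erase_of_mem (Finset.mem_univ _), Finset.card_univ]
        have hsum : (∑ x' ∈ E, if (∃ c : F, x' = c • x ∨ x = c • x') then (1:ℝ) else 0)
            = ((E.filter fun x' => ∃ c : F, x' = c • x ∨ x = c • x').card : ℝ) := by
          rw [Finset.card_filter]
          push_cast
          rfl
        rw [hsum]
        by_cases h0 : (0 : Fin d → F) ∈ E
        · have hcard : (E.filter fun x' => ∃ c : F, x' = c • x ∨ x = c • x').card ≤ (q - 1) + 1 := by
            calc (E.filter fun x' => ∃ c : F, x' = c • x ∨ x = c • x').card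
                ≤ (insert (0 : Fin d → F)
                    (((univ : Finset F).erase 0).image (fun c => c • x))).card :=
                  Finset.card_le_card hsubset
              _ ≤ (((univ : Finset F).erase 0).image (fun c => c • x)).card + 1 :=
                  Finset.card_insert_le _ _
              _ ≤ (q - 1) + 1 := by omega
          have hε1' : εR = 1 := by rw [hε, if_pos h0]
          rw [hε1']
          have : ((q:ℝ) - 1 + 1) = ((q - 1 + 1 : ℕ) : ℝ) := by
            push_cast [Nat.cast_sub hq1]
            ring
          rw [this]
          exact_mod_cast hcard
        · have hnot : (0 : Fin d → F) ∉ (E.filter fun x' => ∃ c : F, x' = c • x ∨ x = c • x') :=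
            fun h => h0 (Finset.mem_filter.mp h).1
          have hcard : (E.filter fun x' => ∃ c : F, x' = c • x ∨ x = c • x').card ≤ q - 1 := by
            calc (E.filter fun x' => ∃ c : F, x' = c • x ∨ x = c • x').card
                ≤ (((univ : Finset F).erase 0).image (fun c => c • x)).card :=
                  Finset.card_le_card ((Finset.subset_insert_iff_of_notMem hnot).mp hsubset)
              _ ≤ q - 1 := himg
          have hε0' : εR = 0 := by rw [hε, if_neg h0]
          rw [hε0', add_zero]
          have : ((q:ℝ) - 1) = ((q - 1 : ℕ) : ℝ) := by push_cast [Nat.cast_sub hq1]; ring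
          rw [this]
          exact_mod_cast hcard
    calc P ≤ ∑ x ∈ E, (if x = (0 : Fin d → F) then e else ((q:ℝ) - 1 + εR)) :=
          Finset.sum_le_sum hpx
      _ = (e - εR) * ((q:ℝ) - 1 + εR) + εR * e := by
          have : ∀ x ∈ E, (if x = (0 : Fin d → F) then e else ((q:ℝ) - 1 + εR))
              = ((q:ℝ) - 1 + εR) + (if x = (0 : Fin d → F) then e - ((q:ℝ) - 1 + εR) else 0) := by
            intro x _
            split <;> ring
          rw [Finset.sum_congr rfl this, Finset.sum_add_distrib, Finset.sum_const,
            Finset.sum_ite_eq' E (0 : Fin d → F) (fun _ => e - ((q:ℝ) - 1 + εR)), hε, he]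
          split <;> simp <;> ring
  -- variance bound
  set g : (Fin d → F) → ℝ := fun y => (q:ℝ) * (n y : ℝ) - e with hg
  have hncast : (∑ y : Fin d → F, (n y : ℝ)^2) = ∑ x ∈ E, ∑ x' ∈ E, (K x x' : ℝ) := by
    have := congrArg (Nat.cast : ℕ → ℝ) hT
    push_cast at this
    exact this
  have expand : ∑ y : Fin d → F, g y ^ 2
      = (q:ℝ)^2 * (∑ x ∈ E, ∑ x' ∈ E, (K x x' : ℝ))
        - 2 * e * ((q:ℝ) * ∑ y : Fin d → F, (n y : ℝ)) + Q * e^2 := by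
    have hpt : ∀ y : Fin d → F, g y ^ 2
        = (q:ℝ)^2 * (n y : ℝ)^2 - 2 * e * ((q:ℝ) * (n y : ℝ)) + e^2 := by
      intro y; rw [hg]; ring
    have hpt' : ∀ y : Fin d → F, g y ^ 2
        = (q:ℝ)^2 * (n y : ℝ)^2 - (2 * e * (q:ℝ)) * (n y : ℝ) + e^2 := by
      intro y; rw [hpt]; ring
    calc ∑ y : Fin d → F, g y ^ 2
        = ∑ y : Fin d → F, ((q:ℝ)^2 * (n y : ℝ)^2 - (2 * e * (q:ℝ)) * (n y : ℝ) + e^2) :=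
          Finset.sum_congr rfl fun y _ => hpt' y
      _ = (q:ℝ)^2 * (∑ y : Fin d → F, (n y : ℝ)^2)
          - (2 * e * (q:ℝ)) * (∑ y : Fin d → F, (n y : ℝ))
          + ((Finset.univ : Finset (Fin d → F)).card : ℝ) * e^2 := by
          rw [Finset.sum_add_distrib, Finset.sum_sub_distrib, ← Finset.mul_sum,
            ← Finset.mul_sum, Finset.sum_const, nsmul_eq_mul]
      _ = (q:ℝ)^2 * (∑ x ∈ E, ∑ x' ∈ E, (K x x' : ℝ))
          - 2 * e * ((q:ℝ) * ∑ y : Fin d → F, (n y : ℝ)) + Q * e^2 := by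
          rw [hncast, hcardU, hQ]
          push_cast
          ring
  have hV : ∑ y : Fin d → F, g y ^ 2 ≤ (q:ℝ)^2 * Q * e := by
    have step1 : ∑ y : Fin d → F, g y ^ 2
        ≤ ((q:ℝ) * Q - Q) * (P + (q:ℝ) * εR - 2 * e * εR) := by
      have hrhs : Q * e^2 + ((q:ℝ) * Q - Q) * P + ((q:ℝ)^2 * Q - (q:ℝ) * Q) * εR
          - 2 * e * (e * Q + εR * ((q:ℝ) * Q - Q)) + Q * e^2
          = ((q:ℝ) * Q - Q) * (P + (q:ℝ) * εR - 2 * e * εR) := by ring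
      rw [expand, hScast]
      linarith [hTcast]
    have hqQ : 0 ≤ (q:ℝ) * Q - Q := by nlinarith
    rcases hε1 with h | h
    · rw [h] at hP step1
      have hPe : P ≤ e * ((q:ℝ) - 1) := by linarith [hP]
      calc ∑ y : Fin d → F, g y ^ 2 ≤ ((q:ℝ) * Q - Q) * (P + (q:ℝ) * 0 - 2 * e * 0) := step1
        _ ≤ (q:ℝ)^2 * Q * e := by nlinarith [mul_le_mul_of_nonneg_left hPe hqQ, sq_nonneg ((q:ℝ) - 1)]
    · have h0 : (0 : Fin d → F) ∈ E := by
        by_contra h0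
        rw [hε, if_neg h0] at h
        norm_num at h
      have he1 : 1 ≤ e := by
        rw [he]
        exact_mod_cast Finset.card_pos.mpr ⟨0, h0⟩
      rw [h] at hP step1
      have hPe : P + (q:ℝ) * 1 - 2 * e * 1 ≤ e * ((q:ℝ) - 1) := by nlinarith [hP]
      calc ∑ y : Fin d → F, g y ^ 2 ≤ ((q:ℝ) * Q - Q) * (P + (q:ℝ) * 1 - 2 * e * 1) := step1
        _ ≤ (q:ℝ)^2 * Q * e := by nlinarith [mul_le_mul_of_nonneg_left hPe hqQ, sq_nonneg ((q:ℝ) - 1)]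
  -- Cauchy-Schwarz
  have hCS : (∑ y ∈ A, g y) ≤ Real.sqrt (a * ((q:ℝ)^2 * Q * e)) := by
    have h1 : (∑ y ∈ A, g y)^2 ≤ a * ∑ y ∈ A, g y^2 := by
      have := sq_sum_le_card_mul_sum_sq (s := A) (f := g)
      rw [ha]
      exact_mod_cast this
    have h2 : ∑ y ∈ A, g y^2 ≤ ∑ y : Fin d → F, g y^2 :=
      Finset.sum_le_sum_of_subset_of_nonneg (Finset.subset_univ A) (fun y _ _ => sq_nonneg _)
    have h3 : (∑ y ∈ A, g y)^2 ≤ a * ((q:ℝ)^2 * Q * e) := by nlinarith [hV, ha0]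
    calc ∑ y ∈ A, g y ≤ |∑ y ∈ A, g y| := le_abs_self _
      _ = Real.sqrt ((∑ y ∈ A, g y)^2) := (Real.sqrt_sq_eq_abs _).symm
      _ ≤ Real.sqrt (a * ((q:ℝ)^2 * Q * e)) := Real.sqrt_le_sqrt h3
  -- simplify the sqrt
  have hsqrt : Real.sqrt (a * ((q:ℝ)^2 * Q * e))
      = (q:ℝ) * ((q:ℝ) ^ ((d:ℝ)/2) * Real.sqrt (e * a)) := by
    have hrw : ((q:ℝ) ^ ((d:ℝ)/2))^2 = Q := by
      rw [← Real.rpow_natCast ((q:ℝ) ^ ((d:ℝ)/2)) 2, ← Real.rpow_mul (le_of_lt hq0)]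
      rw [hQ, ← Real.rpow_natCast (q:ℝ) d]
      congr 1
      push_cast
      ring
    have hfac : a * ((q:ℝ)^2 * Q * e) = ((q:ℝ) * (q:ℝ) ^ ((d:ℝ)/2))^2 * (e * a) := by
      rw [mul_pow, hrw]; ring
    rw [hfac, Real.sqrt_mul (by positivity), Real.sqrt_sq (by positivity)]
    ring
  -- final assembly
  have hsumg : ∑ y ∈ A, g y = (q:ℝ) * (∑ y ∈ A, (n y : ℝ)) - a * e := by
    rw [hg, Finset.sum_sub_distrib, Finset.sum_const, ← Finset.mul_sum, ha, nsmul_eq_mul]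
  have hNcast : (((E ×ˢ A).filter (fun p => ∑ i, p.1 i * p.2 i = 0)).card : ℝ)
      = ∑ y ∈ A, (n y : ℝ) := by
    rw [hN]; push_cast; rfl
  have hfinal : (q:ℝ) * (((E ×ˢ A).filter (fun p => ∑ i, p.1 i * p.2 i = 0)).card : ℝ)
      ≤ a * e + (q:ℝ) * ((q:ℝ) ^ ((d:ℝ)/2) * Real.sqrt (e * a)) := by
    rw [hNcast]
    have := hCS
    rw [hsqrt] at this
    linarith [hsumg]
  have hgoal : (((E ×ˢ A).filter (fun p => ∑ i, p.1 i * p.2 i = 0)).card : ℝ)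
      ≤ (a * e + (q:ℝ) * ((q:ℝ) ^ ((d:ℝ)/2) * Real.sqrt (e * a))) / (q:ℝ) := by
    rw [le_div_iff₀ hq0]
    linarith [hfinal]
  have heq : (a * e + (q:ℝ) * ((q:ℝ) ^ ((d:ℝ)/2) * Real.sqrt (e * a))) / (q:ℝ)
      = e * a / (q:ℝ) + (q:ℝ) ^ ((d:ℝ)/2) * Real.sqrt (e * a) := by
    field_simp
  rw [heq] at hgoal
  exact hgoal
end

section
/- Let E ⊆ 𝔽_q² with |E| ≥ C·q^(3/2) for a sufficiently large constant C. Then the number of quadruples (x, z, x', z') ∈ E⁴ with z·x = z'·x' is at most C'·|E|⁴/q for some absolute constant C'. -/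
open Finset

lemma sq_fiber' {α β : Type*} [DecidableEq α] [DecidableEq β] [Fintype β]
    (s : Finset α) (f : α → β) :
    ((s ×ˢ s).filter fun p => f p.1 = f p.2).card
      = ∑ t : β, ((s.filter fun x => f x = t).card) ^ 2 := by
  rw [Finset.card_eq_sum_card_fiberwise
    (f := fun p => f p.1) (t := univ) (fun _ _ => mem_univ _)]
  refine Finset.sum_congr rfl fun t _ => ?_
  rw [sq, ← Finset.card_product]
  congr 1
  ext p
  simp only [mem_filter, mem_product]
  constructor
  · rintro ⟨⟨⟨h1, h2⟩, h3⟩, h4⟩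
    exact ⟨⟨h1, h4⟩, h2, h3.symm.trans h4⟩
  · rintro ⟨⟨h1, h4⟩, h2, h5⟩
    exact ⟨⟨⟨h1, h2⟩, h4.trans h5.symm⟩, h4⟩

lemma fiber_sum' {α β : Type*} [DecidableEq β] [Fintype β] (s : Finset α) (f : α → β) :
    ∑ t : β, (s.filter fun x => f x = t).card = s.card :=
  (Finset.card_eq_sum_card_fiberwise (fun _ _ => mem_univ _)).symm

section helpers
variable {F : Type} [Field F] [Fintype F] [DecidableEq F]

lemma line_card_le' (x x' : Fin 2 → F) (h : x ≠ x') :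
    ((univ : Finset (Fin 2 → F)).filter
      (fun z => ∑ i, z i * x i = ∑ i, z i * x' i)).card ≤ Fintype.card F := by
  have key : ∀ z : Fin 2 → F, (∑ i, z i * x i = ∑ i, z i * x' i) ↔
      z 0 * (x 0 - x' 0) = z 1 * (x' 1 - x 1) := by
    intro z
    rw [Fin.sum_univ_two, Fin.sum_univ_two]
    constructor <;> intro hh <;> ring_nf <;> ring_nf at hh <;> linear_combination hh
  by_cases ha : x 0 - x' 0 ≠ 0
  · have hc : Fintype.card F = (univ : Finset F).card := rfl
    rw [hc]
    apply Finset.card_le_card_of_injOn (fun z => z 1) (fun z _ => mem_univ _)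
    intro z hz w hw hzw0
    have hzw : z 1 = w 1 := hzw0
    simp only [mem_coe, mem_filter] at hz hw
    have h1 : z 0 * (x 0 - x' 0) = w 0 * (x 0 - x' 0) := by
      rw [(key z).1 hz.2, (key w).1 hw.2, hzw]
    have h0 : z 0 = w 0 := mul_right_cancel₀ ha h1
    funext i
    fin_cases i
    · exact h0
    · exact hzw
  · push_neg at ha
    have hb : x' 1 - x 1 ≠ 0 := by
      intro hb
      apply h
      funext i
      fin_cases i
      · have := sub_eq_zero.mp ha; exact this
      · have := sub_eq_zero.mp hb; exact this.symm
    have hc : Fintype.card F = (univ : Finset F).card := rfl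
    rw [hc]
    apply Finset.card_le_card_of_injOn (fun z => z 0) (fun z _ => mem_univ _)
    intro z hz w hw hzw0
    have hzw : z 0 = w 0 := hzw0
    simp only [mem_coe, mem_filter] at hz hw
    have h1 : z 1 * (x' 1 - x 1) = 0 := by rw [← (key z).1 hz.2, ha, mul_zero]
    have h2 : w 1 * (x' 1 - x 1) = 0 := by rw [← (key w).1 hw.2, ha, mul_zero]
    have hz1 : z 1 = 0 := by
      rcases mul_eq_zero.mp h1 with h' | h'
      · exact h'
      · exact absurd h' hb
    have hw1 : w 1 = 0 := by
      rcases mul_eq_zero.mp h2 with h' | h'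
      · exact h'
      · exact absurd h' hb
    funext i
    fin_cases i
    · exact hzw
    · exact hz1.trans hw1.symm

def bcount (E : Finset (Fin 2 → F)) (z : Fin 2 → F) (t : F) : ℕ :=
  (E.filter fun x => (∑ i, z i * x i) = t).card

def rcount (E : Finset (Fin 2 → F)) (t : F) : ℕ :=
  ((E ×ˢ E).filter fun p => (∑ i, p.2 i * p.1 i) = t).card

lemma rA (E : Finset (Fin 2 → F)) (t : F) :
    rcount E t = ∑ z ∈ E, bcount E z t := by
  unfold rcount bcount
  rw [Finset.card_eq_sum_card_fiberwise (f := fun p => p.2) (t := E)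
    (fun p hp => by simp only [mem_coe, mem_filter, mem_product] at hp; exact hp.1.2)]
  refine Finset.sum_congr rfl fun z hz => ?_
  have heq : ((E ×ˢ E).filter fun p => (∑ i, p.2 i * p.1 i) = t).filter (fun p => p.2 = z)
      = (E.filter fun x => (∑ i, z i * x i) = t) ×ˢ {z} := by
    ext p
    simp only [mem_filter, mem_product, mem_singleton]
    constructor
    · rintro ⟨⟨⟨h1, h2⟩, h3⟩, h4⟩
      exact ⟨⟨h1, by rw [← h4]; exact h3⟩, h4⟩
    · rintro ⟨⟨h1, h3⟩, h4⟩
      exact ⟨⟨⟨h1, h4 ▸ hz⟩, by rw [h4]; exact h3⟩, h4⟩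
  rw [heq, Finset.card_product, Finset.card_singleton, mul_one]

lemma sumz_le' (E : Finset (Fin 2 → F)) :
    ∑ z : Fin 2 → F,
        ((E ×ˢ E).filter fun p => (∑ i, z i * p.1 i) = ∑ i, z i * p.2 i).card
      ≤ E.card * (Fintype.card F) ^ 2 + E.card ^ 2 * Fintype.card F := by
  have swap : ∑ z : Fin 2 → F,
        ((E ×ˢ E).filter fun p => (∑ i, z i * p.1 i) = ∑ i, z i * p.2 i).card
      = ∑ p ∈ E ×ˢ E, ((univ : Finset (Fin 2 → F)).filter
          fun z => (∑ i, z i * p.1 i) = ∑ i, z i * p.2 i).card := by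
    simp_rw [Finset.card_filter]
    rw [Finset.sum_comm]
  rw [swap]
  have hbound : ∀ p ∈ E ×ˢ E,
      ((univ : Finset (Fin 2 → F)).filter
          fun z => (∑ i, z i * p.1 i) = ∑ i, z i * p.2 i).card
        ≤ if p.1 = p.2 then (Fintype.card F) ^ 2 else Fintype.card F := by
    intro p _
    by_cases hp : p.1 = p.2
    · simp only [hp, if_true]
      calc _ ≤ (univ : Finset (Fin 2 → F)).card := Finset.card_filter_le _ _
        _ = (Fintype.card F) ^ 2 := by
            rw [Finset.card_univ]
            simp [Fintype.card_fun]
    · simp only [hp, if_false]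
      exact line_card_le' p.1 p.2 hp
  calc ∑ p ∈ E ×ˢ E, ((univ : Finset (Fin 2 → F)).filter
          fun z => (∑ i, z i * p.1 i) = ∑ i, z i * p.2 i).card
      ≤ ∑ p ∈ E ×ˢ E, (if p.1 = p.2 then (Fintype.card F) ^ 2 else Fintype.card F) :=
        Finset.sum_le_sum hbound
    _ = ((E ×ˢ E).filter fun p => p.1 = p.2).card * (Fintype.card F) ^ 2
        + ((E ×ˢ E).filter fun p => ¬ p.1 = p.2).card * Fintype.card F := by
        rw [Finset.sum_ite, Finset.sum_const, Finset.sum_const, smul_eq_mul, smul_eq_mul]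
    _ ≤ E.card * (Fintype.card F) ^ 2 + E.card ^ 2 * Fintype.card F := by
        gcongr
        · apply Finset.card_le_card_of_injOn (fun p => p.1)
          · intro p hp
            simp only [mem_coe, mem_filter, mem_product] at hp
            exact hp.1.1
          · intro p hp q hq hpq
            simp only [mem_coe, mem_filter] at hp hq
            have h1 : p.1 = q.1 := hpq
            exact Prod.ext h1 (hp.2 ▸ hq.2 ▸ h1)
        · calc _ ≤ (E ×ˢ E).card := Finset.card_filter_le _ _
            _ = E.card ^ 2 := by rw [Finset.card_product, sq]

lemma rN (E : Finset (Fin 2 → F)) :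
    ((((E ×ˢ E) ×ˢ (E ×ˢ E)).filter
        (fun p => (∑ i, p.1.2 i * p.1.1 i) = ∑ i, p.2.2 i * p.2.1 i)).card : ℕ)
      = ∑ t : F, (rcount E t) ^ 2 := by
  unfold rcount
  exact sq_fiber' (E ×ˢ E) (fun p => ∑ i, p.2 i * p.1 i)

lemma bS (E : Finset (Fin 2 → F)) (z : Fin 2 → F) :
    ∑ t : F, bcount E z t = E.card := by
  unfold bcount
  exact fiber_sum' E (fun x => ∑ i, z i * x i)

lemma bsq (E : Finset (Fin 2 → F)) :
    ∑ z : Fin 2 → F, ∑ t : F, (bcount E z t) ^ 2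
      ≤ E.card * (Fintype.card F) ^ 2 + E.card ^ 2 * Fintype.card F := by
  unfold bcount
  have h1 : ∀ z : Fin 2 → F, ∑ t : F, ((E.filter fun x => (∑ i, z i * x i) = t).card) ^ 2
      = ((E ×ˢ E).filter fun p => (∑ i, z i * p.1 i) = ∑ i, z i * p.2 i).card :=
    fun z => (sq_fiber' E (fun x => ∑ i, z i * x i)).symm
  rw [Finset.sum_congr rfl (fun z _ => h1 z)]
  exact sumz_le' E

end helpers

theorem stmt_13 :
    ∃ C C' : ℝ, 0 < C ∧ 0 < C' ∧
      ∀ (F : Type) [Field F] [Fintype F] [DecidableEq F]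
        (E : Finset (Fin 2 → F)),
        (E.card : ℝ) ≥ C * (Fintype.card F : ℝ) ^ ((3 : ℝ) / 2) →
        ((((E ×ˢ E) ×ˢ (E ×ˢ E)).filter
            (fun p => (∑ i, p.1.2 i * p.1.1 i) = ∑ i, p.2.2 i * p.2.1 i)).card : ℝ)
          ≤ C' * (E.card : ℝ) ^ 4 / Fintype.card F := by
  refine ⟨1, 2, one_pos, two_pos, ?_⟩
  intro F _ _ _ E hE
  set Q : ℝ := (Fintype.card F : ℝ) with hQdef
  have hQ : 0 < Q := by
    simp only [hQdef, Nat.cast_pos]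
    exact Fintype.card_pos
  set e : ℝ := (E.card : ℝ) with hedef
  have he0 : 0 ≤ e := Nat.cast_nonneg _
  have hN := rN E
  have hA : ∀ t, rcount E t = ∑ z ∈ E, bcount E z t := fun t => rA E t
  have hBsum : ∀ z : Fin 2 → F, ∑ t : F, bcount E z t = E.card := fun z => bS E z
  have hZ : ∑ z : Fin 2 → F, ∑ t : F, (bcount E z t) ^ 2
      ≤ E.card * (Fintype.card F) ^ 2 + E.card ^ 2 * Fintype.card F := bsq E
  set St : F → ℝ := fun t => ∑ z ∈ E, ((bcount E z t : ℝ) - e / Q) with hStdef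
  have h1 : ∀ t, (rcount E t : ℝ) = St t + e ^ 2 / Q := by
    intro t
    have hcast : (rcount E t : ℝ) = ∑ z ∈ E, (bcount E z t : ℝ) := by
      rw [hA t]; push_cast; ring
    rw [hStdef]
    simp only [Finset.sum_sub_distrib, Finset.sum_const, nsmul_eq_mul, ← hcast, ← hedef]
    field_simp
    ring
  have hS0 : ∑ t : F, St t = 0 := by
    rw [hStdef]
    rw [Finset.sum_comm]
    have hz : ∀ z ∈ E, ∑ t : F, ((bcount E z t : ℝ) - e / Q) = 0 := by
      intro z _
      rw [Finset.sum_sub_distrib, Finset.sum_const, nsmul_eq_mul, Finset.card_univ]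
      have hb : ∑ t : F, (bcount E z t : ℝ) = e := by
        rw [hedef, ← hBsum z]; push_cast; ring
      rw [hb, ← hQdef]
      field_simp
      ring
    rw [Finset.sum_congr rfl hz, Finset.sum_const, smul_zero]
  have hvar : ∀ z : Fin 2 → F, ∑ t : F, ((bcount E z t : ℝ) - e / Q) ^ 2
      = (∑ t : F, (bcount E z t : ℝ) ^ 2) - e ^ 2 / Q := by
    intro z
    have hsum : ∑ t : F, (bcount E z t : ℝ) = e := by
      rw [hedef, ← hBsum z]; push_cast; ring
    have expand : ∀ t : F, ((bcount E z t : ℝ) - e / Q) ^ 2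
        = (bcount E z t : ℝ) ^ 2 - 2 * (e / Q) * (bcount E z t : ℝ) + (e / Q) ^ 2 := by
      intro t; ring
    rw [Finset.sum_congr rfl (fun t _ => expand t), Finset.sum_add_distrib,
      Finset.sum_sub_distrib, ← Finset.mul_sum, hsum, Finset.sum_const,
      Finset.card_univ, nsmul_eq_mul, ← hQdef]
    field_simp
    ring
  have htotvar : ∑ z : Fin 2 → F, ∑ t : F, ((bcount E z t : ℝ) - e / Q) ^ 2 ≤ e * Q ^ 2 := by
    have hc : ∑ z : Fin 2 → F, (∑ t : F, (bcount E z t : ℝ) ^ 2) ≤ e * Q ^ 2 + e ^ 2 * Q := by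
      have hcast : ((∑ z : Fin 2 → F, ∑ t : F, (bcount E z t) ^ 2 : ℕ) : ℝ)
          ≤ ((E.card * (Fintype.card F) ^ 2 + E.card ^ 2 * Fintype.card F : ℕ) : ℝ) := by
        exact_mod_cast hZ
      push_cast at hcast
      convert hcast using 2 <;> push_cast <;> ring
    have hcardV : (Fintype.card (Fin 2 → F) : ℝ) = Q ^ 2 := by
      rw [hQdef]
      rw [show Fintype.card (Fin 2 → F) = Fintype.card F ^ 2 by
        simp [Fintype.card_fun]]
      push_cast
      ring
    calc ∑ z : Fin 2 → F, ∑ t : F, ((bcount E z t : ℝ) - e / Q) ^ 2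
        = ∑ z : Fin 2 → F, ((∑ t : F, (bcount E z t : ℝ) ^ 2) - e ^ 2 / Q) :=
          Finset.sum_congr rfl (fun z _ => hvar z)
      _ = (∑ z : Fin 2 → F, ∑ t : F, (bcount E z t : ℝ) ^ 2) - Q ^ 2 * (e ^ 2 / Q) := by
          rw [Finset.sum_sub_distrib, Finset.sum_const, Finset.card_univ, nsmul_eq_mul, hcardV]
      _ ≤ (e * Q ^ 2 + e ^ 2 * Q) - Q ^ 2 * (e ^ 2 / Q) := by gcongr
      _ = e * Q ^ 2 := by field_simp; ring
  have hCS : ∀ t : F, (St t) ^ 2 ≤ e * ∑ z ∈ E, ((bcount E z t : ℝ) - e / Q) ^ 2 := by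
    intro t
    rw [hStdef, hedef]
    exact sq_sum_le_card_mul_sum_sq
  have hSsum : ∑ t : F, (St t) ^ 2 ≤ e ^ 2 * Q ^ 2 := by
    calc ∑ t : F, (St t) ^ 2
        ≤ ∑ t : F, e * ∑ z ∈ E, ((bcount E z t : ℝ) - e / Q) ^ 2 :=
          Finset.sum_le_sum fun t _ => hCS t
      _ ≤ ∑ t : F, e * ∑ z : Fin 2 → F, ((bcount E z t : ℝ) - e / Q) ^ 2 := by
          apply Finset.sum_le_sum
          intro t _
          apply mul_le_mul_of_nonneg_left _ he0
          exact Finset.sum_le_sum_of_subset_of_nonneg (Finset.subset_univ E)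
            (fun z _ _ => sq_nonneg _)
      _ = e * ∑ z : Fin 2 → F, ∑ t : F, ((bcount E z t : ℝ) - e / Q) ^ 2 := by
          rw [← Finset.mul_sum, Finset.sum_comm]
      _ ≤ e * (e * Q ^ 2) := mul_le_mul_of_nonneg_left htotvar he0
      _ = e ^ 2 * Q ^ 2 := by ring
  have hNR : ((((E ×ˢ E) ×ˢ (E ×ˢ E)).filter
      (fun p => (∑ i, p.1.2 i * p.1.1 i) = ∑ i, p.2.2 i * p.2.1 i)).card : ℝ)
      = ∑ t : F, (St t) ^ 2 + e ^ 4 / Q := by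
    rw [hN]
    push_cast
    rw [Finset.sum_congr rfl (fun t (_ : t ∈ univ) => by rw [h1 t])]
    have expand : ∀ t : F, (St t + e ^ 2 / Q) ^ 2
        = (St t) ^ 2 + 2 * (e ^ 2 / Q) * St t + (e ^ 2 / Q) ^ 2 := fun t => by ring
    rw [Finset.sum_congr rfl (fun t _ => expand t), Finset.sum_add_distrib,
      Finset.sum_add_distrib, ← Finset.mul_sum, hS0, Finset.sum_const,
      Finset.card_univ, nsmul_eq_mul, ← hQdef]
    field_simp
    ring
  have hQ32 : (Q ^ ((3:ℝ)/2)) ^ 2 = Q ^ (3:ℕ) := by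
    rw [← Real.rpow_natCast (Q ^ ((3:ℝ)/2)) 2, ← Real.rpow_mul hQ.le,
      ← Real.rpow_natCast Q 3]
    norm_num
  have he32 : Q ^ (3:ℕ) ≤ e ^ 2 := by
    rw [← hQ32]
    have h' : Q ^ ((3:ℝ)/2) ≤ e := by
      rw [ge_iff_le, one_mul] at hE
      exact hE
    exact pow_le_pow_left₀ (Real.rpow_nonneg hQ.le _) h' 2
  have hfinal : e ^ 2 * Q ^ 2 ≤ e ^ 4 / Q := by
    rw [le_div_iff₀ hQ]
    nlinarith [sq_nonneg e, he32, hQ]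
  rw [hNR]
  calc ∑ t : F, (St t) ^ 2 + e ^ 4 / Q
      ≤ e ^ 2 * Q ^ 2 + e ^ 4 / Q := by linarith [hSsum]
    _ ≤ e ^ 4 / Q + e ^ 4 / Q := by linarith [hfinal]
    _ = 2 * e ^ 4 / Q := by ring
end

section
/- Let E ⊆ 𝔽_q³ with |E| ≥ q^(2+ε) for some ε > 0 and q sufficiently large. Then there do not exist subsets E₁, E₂, E₃ ⊆ E with |E_i| ≥ c|E| for each i (c > 0 an absolute constant) such that every triple (x, y, z) ∈ E₁ × E₂ × E₃ is linearly independent. -/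
set_option linter.unusedSectionVars false
set_option maxHeartbeats 1000000

open Finset Matrix Module

section Aux

variable {F : Type} [Field F] [Fintype F] [DecidableEq F]

private def dotL (v : Fin 3 → F) : (Fin 3 → F) →ₗ[F] F where
  toFun w := v ⬝ᵥ w
  map_add' x y := dotProduct_add v x y
  map_smul' c x := by simp [dotProduct_smul]

private lemma dotL_apply (v w : Fin 3 → F) : dotL v w = v ⬝ᵥ w := rfl

private lemma dotL_single (v : Fin 3 → F) (j : Fin 3) : dotL v (Pi.single j 1) = v j := by
  simp [dotL_apply, dotProduct_single]

private lemma finrank_ker_dotL {v : Fin 3 → F} (hv : v ≠ 0) :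
    Module.finrank F (LinearMap.ker (dotL v)) = 2 := by
  obtain ⟨j, hj'⟩ := Function.ne_iff.mp hv
  have hj : v j ≠ 0 := by simpa using hj'
  have hsurj : LinearMap.range (dotL v) = ⊤ := by
    rw [LinearMap.range_eq_top]
    intro t
    refine ⟨(t * (v j)⁻¹) • (Pi.single j 1 : Fin 3 → F), ?_⟩
    rw [_root_.map_smul, dotL_single, smul_eq_mul]
    field_simp
  have h := LinearMap.finrank_range_add_finrank_ker (dotL v)
  rw [hsurj, finrank_top, Module.finrank_self, Module.finrank_fin_fun] at h
  omega

private lemma card_submodule (S : Submodule F (Fin 3 → F)) (P : (Fin 3 → F) → Prop)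
    [DecidablePred P] (hP : ∀ x, P x ↔ x ∈ S) :
    (univ.filter P).card = Fintype.card F ^ Module.finrank F S := by
  classical
  rw [← Fintype.card_subtype]
  letI : Fintype S := Fintype.ofFinite _
  rw [Fintype.card_congr (Equiv.subtypeEquivRight hP), card_eq_pow_finrank (K := F)]

private lemma card_dot_zero {v : Fin 3 → F} (hv : v ≠ 0) :
    (univ.filter (fun w : Fin 3 → F => v ⬝ᵥ w = 0)).card = Fintype.card F ^ 2 := by
  rw [card_submodule (LinearMap.ker (dotL v)) _
    (fun x => by simp [LinearMap.mem_ker, dotL_apply]), finrank_ker_dotL hv]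

private lemma no_common {a x y z : Fin 3 → F} (ha : a ≠ 0)
    (hx : x ⬝ᵥ a = 0) (hy : y ⬝ᵥ a = 0) (hz : z ⬝ᵥ a = 0)
    (h : LinearIndependent F ![x, y, z]) : False := by
  have hspan : Submodule.span F (Set.range ![x, y, z]) ≤ LinearMap.ker (dotL a) := by
    rw [Submodule.span_le]
    rintro v ⟨i, rfl⟩
    fin_cases i <;>
      simp [LinearMap.mem_ker, dotL_apply, dotProduct_comm a, hx, hy, hz]
  have h3 : Module.finrank F (Submodule.span F (Set.range ![x, y, z])) = 3 := by
    rw [finrank_span_eq_card h, Fintype.card_fin]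
  have hle := Submodule.finrank_mono hspan
  rw [h3, finrank_ker_dotL ha] at hle
  omega

private lemma card_pair {p₁ p₂ : Fin 3 → F} (h : LinearIndependent F ![p₁, p₂]) :
    (univ.filter (fun a : Fin 3 → F => p₁ ⬝ᵥ a = 0 ∧ p₂ ⬝ᵥ a = 0)).card ≤ Fintype.card F := by
  classical
  have h2 := linearIndependent_fin2.mp h
  simp only [Matrix.cons_val_one, Matrix.head_cons, Matrix.cons_val_zero] at h2
  have hp₁ : p₁ ≠ 0 := by
    intro h0
    exact h2.2 0 (by rw [h0, zero_smul])
  set S : Submodule F (Fin 3 → F) := LinearMap.ker (dotL p₁) ⊓ LinearMap.ker (dotL p₂) with hS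
  have hcard : (univ.filter (fun a : Fin 3 → F => p₁ ⬝ᵥ a = 0 ∧ p₂ ⬝ᵥ a = 0)).card
      = Fintype.card F ^ Module.finrank F S :=
    card_submodule S _ (fun x => by
      simp [hS, Submodule.mem_inf, LinearMap.mem_ker, dotL_apply])
  rw [hcard]
  have hlt : S < LinearMap.ker (dotL p₁) := by
    refine lt_of_le_of_ne inf_le_left ?_
    intro heq
    have hker : LinearMap.ker (dotL p₁) ≤ LinearMap.ker (dotL p₂) := by
      rw [← heq]; exact inf_le_right
    obtain ⟨j, hj'⟩ := Function.ne_iff.mp hp₁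
    have hj : p₁ j ≠ 0 := by simpa using hj'
    set cc := p₂ ⬝ᵥ (Pi.single j 1 : Fin 3 → F) / p₁ j with hcc
    have hrel : ∀ a, p₂ ⬝ᵥ a = cc * (p₁ ⬝ᵥ a) := by
      intro a
      have hmem : a - ((p₁ ⬝ᵥ a) / p₁ j) • (Pi.single j 1 : Fin 3 → F)
          ∈ LinearMap.ker (dotL p₁) := by
        rw [LinearMap.mem_ker, map_sub, _root_.map_smul, dotL_single, dotL_apply, smul_eq_mul]
        field_simp
        ring
      have hm2 := hker hmem
      rw [LinearMap.mem_ker, map_sub, _root_.map_smul, dotL_apply, dotL_apply, smul_eq_mul,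
        sub_eq_zero] at hm2
      rw [hm2, hcc]
      field_simp
    have hp2 : p₂ = cc • p₁ := by
      funext i
      have := hrel (Pi.single i 1)
      simpa [dotProduct_single] using this
    rcases eq_or_ne cc 0 with h0 | h0
    · exact h2.1 (by rw [hp2, h0, zero_smul])
    · exact h2.2 cc⁻¹ (by rw [hp2, smul_smul, inv_mul_cancel₀ h0, one_smul])
  have hfr : Module.finrank F S < 2 := by
    have := Submodule.finrank_lt_finrank_of_lt hlt
    rwa [finrank_ker_dotL hp₁] at this
  calc Fintype.card F ^ Module.finrank F S ≤ Fintype.card F ^ 1 :=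
        Nat.pow_le_pow_right Fintype.card_pos (by omega)
    _ = Fintype.card F := pow_one _

private lemma key_count {E₁ : Finset (Fin 3 → F)} (h0 : (0 : Fin 3 → F) ∉ E₁) :
    (E₁.card * (Fintype.card F ^ 2 - 1)) ^ 2 ≤
      (univ.filter (fun a : Fin 3 → F => a ≠ 0 ∧ ∃ p ∈ E₁, p ⬝ᵥ a = 0)).card *
        (E₁.card * (E₁.card * Fintype.card F + Fintype.card F ^ 3)) := by
  classical
  set q := Fintype.card F with hq
  set m := E₁.card with hm
  set A : Finset (Fin 3 → F) := univ.filter (fun a => a ≠ 0) with hA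
  set Supp : Finset (Fin 3 → F) :=
    univ.filter (fun a : Fin 3 → F => a ≠ 0 ∧ ∃ p ∈ E₁, p ⬝ᵥ a = 0) with hSupp
  set n : (Fin 3 → F) → ℕ := fun a => (E₁.filter (fun p => p ⬝ᵥ a = 0)).card with hn
  have hnzero : ∀ p ∈ E₁, p ≠ 0 := fun p hp h => h0 (h ▸ hp)
  -- first moment
  have hsum1 : ∑ a ∈ A, n a = m * (q ^ 2 - 1) := by
    have hptcard : ∀ p ∈ E₁, (A.filter (fun a => p ⬝ᵥ a = 0)).card = q ^ 2 - 1 := by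
      intro p hp
      have hff : A.filter (fun a => p ⬝ᵥ a = 0)
          = univ.filter (fun a : Fin 3 → F => a ≠ 0 ∧ p ⬝ᵥ a = 0) := by
        rw [hA, filter_filter]
      have hins : univ.filter (fun a : Fin 3 → F => p ⬝ᵥ a = 0)
          = insert 0 (univ.filter (fun a : Fin 3 → F => a ≠ 0 ∧ p ⬝ᵥ a = 0)) := by
        ext a
        by_cases h : a = 0 <;> simp [h, dotProduct_zero]
      have h2 : (insert (0 : Fin 3 → F)
            (univ.filter (fun a : Fin 3 → F => a ≠ 0 ∧ p ⬝ᵥ a = 0))).card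
          = (univ.filter (fun a : Fin 3 → F => a ≠ 0 ∧ p ⬝ᵥ a = 0)).card + 1 :=
        card_insert_of_notMem (by simp)
      have h3 := card_dot_zero (hnzero p hp)
      rw [hins] at h3
      rw [← hq] at h3
      rw [hff]
      omega
    calc ∑ a ∈ A, n a = ∑ a ∈ A, ∑ p ∈ E₁, if p ⬝ᵥ a = 0 then 1 else 0 := by
          exact sum_congr rfl fun a _ => card_filter _ _
      _ = ∑ p ∈ E₁, ∑ a ∈ A, if p ⬝ᵥ a = 0 then 1 else 0 := sum_comm
      _ = ∑ p ∈ E₁, (A.filter (fun a => p ⬝ᵥ a = 0)).card :=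
          sum_congr rfl fun p _ => (card_filter _ _).symm
      _ = ∑ _p ∈ E₁, (q ^ 2 - 1) := sum_congr rfl hptcard
      _ = m * (q ^ 2 - 1) := by simp only [sum_const, smul_eq_mul]; rfl
  -- second moment
  have hsum2 : ∑ a ∈ A, (n a) ^ 2 ≤ m * (m * q + q ^ 3) := by
    have hexp : ∀ a, (n a) ^ 2
        = ∑ p₁ ∈ E₁, ∑ p₂ ∈ E₁, if p₁ ⬝ᵥ a = 0 ∧ p₂ ⬝ᵥ a = 0 then 1 else 0 := by
      intro a
      have h1 : n a = ∑ p ∈ E₁, if p ⬝ᵥ a = 0 then 1 else 0 := card_filter _ _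
      rw [sq, h1, Finset.sum_mul_sum]
      exact sum_congr rfl fun p₁ _ => sum_congr rfl fun p₂ _ => by
        split_ifs <;> tauto
    calc ∑ a ∈ A, (n a) ^ 2
        = ∑ a ∈ A, ∑ p₁ ∈ E₁, ∑ p₂ ∈ E₁, if p₁ ⬝ᵥ a = 0 ∧ p₂ ⬝ᵥ a = 0 then 1 else 0 :=
          sum_congr rfl fun a _ => hexp a
      _ = ∑ p₁ ∈ E₁, ∑ a ∈ A, ∑ p₂ ∈ E₁, if p₁ ⬝ᵥ a = 0 ∧ p₂ ⬝ᵥ a = 0 then 1 else 0 :=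
          sum_comm
      _ = ∑ p₁ ∈ E₁, ∑ p₂ ∈ E₁, ∑ a ∈ A, if p₁ ⬝ᵥ a = 0 ∧ p₂ ⬝ᵥ a = 0 then 1 else 0 :=
          sum_congr rfl fun p₁ _ => sum_comm
      _ = ∑ p₁ ∈ E₁, ∑ p₂ ∈ E₁, (A.filter (fun a => p₁ ⬝ᵥ a = 0 ∧ p₂ ⬝ᵥ a = 0)).card :=
          sum_congr rfl fun p₁ _ => sum_congr rfl fun p₂ _ => (card_filter _ _).symm
      _ ≤ ∑ p₁ ∈ E₁, (m * q + q ^ 3) := by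
          refine sum_le_sum fun p₁ hp₁ => ?_
          rw [← sum_filter_add_sum_filter_not E₁ (fun p₂ => LinearIndependent F ![p₁, p₂])]
          have hb1 : ∑ p₂ ∈ E₁.filter (fun p₂ => LinearIndependent F ![p₁, p₂]),
              (A.filter (fun a => p₁ ⬝ᵥ a = 0 ∧ p₂ ⬝ᵥ a = 0)).card ≤ m * q := by
            calc _ ≤ ∑ p₂ ∈ E₁.filter (fun p₂ => LinearIndependent F ![p₁, p₂]), q := by
                  refine sum_le_sum fun p₂ hp₂ => ?_
                  have hind := (mem_filter.mp hp₂).2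
                  exact le_trans (card_le_card (filter_subset_filter _ (subset_univ A)))
                    (card_pair hind)
              _ ≤ m * q := by
                  simp only [sum_const, smul_eq_mul]
                  exact Nat.mul_le_mul_right _ (card_filter_le _ _)
          have hb2 : ∑ p₂ ∈ E₁.filter (fun p₂ => ¬ LinearIndependent F ![p₁, p₂]),
              (A.filter (fun a => p₁ ⬝ᵥ a = 0 ∧ p₂ ⬝ᵥ a = 0)).card ≤ q ^ 3 := by
            have hcardspan : (E₁.filter (fun p₂ => ¬ LinearIndependent F ![p₁, p₂])).card ≤ q := by
              have hsub : E₁.filter (fun p₂ => ¬ LinearIndependent F ![p₁, p₂])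
                  ⊆ univ.filter (fun x => x ∈ Submodule.span F {p₁}) := by
                intro p₂ hp₂
                have hdep := (mem_filter.mp hp₂).2
                rw [linearIndependent_fin2] at hdep
                push_neg at hdep
                simp only [Matrix.cons_val_one, Matrix.head_cons, Matrix.cons_val_zero] at hdep
                simp only [mem_filter, mem_univ, true_and]
                by_cases h2 : p₂ = 0
                · simp [h2]
                · obtain ⟨aa, haa⟩ := hdep h2
                  have haa0 : aa ≠ 0 := by
                    rintro rfl
                    rw [zero_smul] at haa
                    exact hnzero p₁ hp₁ haa.symm
                  rw [Submodule.mem_span_singleton]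
                  exact ⟨aa⁻¹, by rw [← haa, smul_smul, inv_mul_cancel₀ haa0, one_smul]⟩
              have hcs : (univ.filter (fun x : Fin 3 → F => x ∈ Submodule.span F {p₁})).card
                  = q ^ Module.finrank F (Submodule.span F ({p₁} : Set (Fin 3 → F))) :=
                card_submodule _ _ (fun x => Iff.rfl)
              have hfr1 : Module.finrank F (Submodule.span F ({p₁} : Set (Fin 3 → F))) = 1 :=
                finrank_span_singleton (hnzero p₁ hp₁)
              calc (E₁.filter (fun p₂ => ¬ LinearIndependent F ![p₁, p₂])).card
                  ≤ _ := card_le_card hsub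
                _ = q := by rw [hcs, hfr1, pow_one]
            calc ∑ p₂ ∈ E₁.filter (fun p₂ => ¬ LinearIndependent F ![p₁, p₂]),
                (A.filter (fun a => p₁ ⬝ᵥ a = 0 ∧ p₂ ⬝ᵥ a = 0)).card
                ≤ ∑ p₂ ∈ E₁.filter (fun p₂ => ¬ LinearIndependent F ![p₁, p₂]), q ^ 2 := by
                  refine sum_le_sum fun p₂ _ => ?_
                  have hsub2 : A.filter (fun a => p₁ ⬝ᵥ a = 0 ∧ p₂ ⬝ᵥ a = 0)
                      ⊆ univ.filter (fun a : Fin 3 → F => p₁ ⬝ᵥ a = 0) := by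
                    intro a ha
                    simp only [mem_filter] at ha ⊢
                    exact ⟨mem_univ a, ha.2.1⟩
                  rw [← card_dot_zero (hnzero p₁ hp₁)]
                  exact card_le_card hsub2
              _ ≤ q * q ^ 2 := by
                  simp only [sum_const, smul_eq_mul]
                  exact Nat.mul_le_mul_right _ hcardspan
              _ = q ^ 3 := by ring
          exact Nat.add_le_add hb1 hb2
      _ = m * (m * q + q ^ 3) := by simp only [sum_const, smul_eq_mul]; rfl
  -- restrict to support
  have hsub : Supp ⊆ A := by
    intro a ha
    simp only [hSupp, hA, mem_filter, mem_univ, true_and] at ha ⊢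
    exact ha.1
  have hvanish : ∀ a ∈ A, a ∉ Supp → n a = 0 := by
    intro a ha hna
    simp only [hA, mem_filter, mem_univ, true_and] at ha
    simp only [hSupp, mem_filter, mem_univ, true_and, not_and, not_exists] at hna
    rw [hn, card_eq_zero, filter_eq_empty_iff]
    intro p hp
    exact hna ha p hp
  have hAsum : ∑ a ∈ A, n a = ∑ a ∈ Supp, n a :=
    (sum_subset hsub (fun a ha hna => hvanish a ha hna)).symm
  have hCS : (∑ a ∈ Supp, n a) ^ 2 ≤ Supp.card * ∑ a ∈ Supp, (n a) ^ 2 :=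
    sq_sum_le_card_mul_sum_sq
  have hmono : ∑ a ∈ Supp, (n a) ^ 2 ≤ ∑ a ∈ A, (n a) ^ 2 :=
    sum_le_sum_of_subset hsub
  calc (m * (q ^ 2 - 1)) ^ 2 = (∑ a ∈ Supp, n a) ^ 2 := by rw [← hAsum, hsum1]
    _ ≤ Supp.card * ∑ a ∈ Supp, (n a) ^ 2 := hCS
    _ ≤ Supp.card * ∑ a ∈ A, (n a) ^ 2 := Nat.mul_le_mul_left _ hmono
    _ ≤ Supp.card * (m * (m * q + q ^ 3)) := Nat.mul_le_mul_left _ hsum2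

private lemma cover_bound {E₁ E₂ E₃ : Finset (Fin 3 → F)}
    (hind : ∀ x ∈ E₁, ∀ y ∈ E₂, ∀ z ∈ E₃, LinearIndependent F ![x, y, z]) :
    (univ.filter (fun a : Fin 3 → F => a ≠ 0 ∧ ∃ p ∈ E₁, p ⬝ᵥ a = 0)).card
    + (univ.filter (fun a : Fin 3 → F => a ≠ 0 ∧ ∃ p ∈ E₂, p ⬝ᵥ a = 0)).card
    + (univ.filter (fun a : Fin 3 → F => a ≠ 0 ∧ ∃ p ∈ E₃, p ⬝ᵥ a = 0)).card
    ≤ 2 * (Fintype.card F ^ 3 - 1) := by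
  classical
  set A : Finset (Fin 3 → F) := univ.filter (fun a => a ≠ 0) with hA
  have hAcard : A.card = Fintype.card F ^ 3 - 1 := by
    have h1 : A = univ.erase 0 := by
      ext a; simp [hA]
    rw [h1, card_erase_of_mem (mem_univ _), card_univ, Fintype.card_fun, Fintype.card_fin]
  have hsplit : ∀ (E' : Finset (Fin 3 → F)),
      (univ.filter (fun a : Fin 3 → F => a ≠ 0 ∧ ∃ p ∈ E', p ⬝ᵥ a = 0)).card
      = ∑ a ∈ A, if ∃ p ∈ E', p ⬝ᵥ a = 0 then 1 else 0 := by
    intro E'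
    rw [← card_filter, ← filter_filter]
  rw [hsplit E₁, hsplit E₂, hsplit E₃, ← sum_add_distrib, ← sum_add_distrib, ← hAcard]
  have hpt : ∀ a ∈ A,
      ((if ∃ p ∈ E₁, p ⬝ᵥ a = 0 then 1 else 0)
        + if ∃ p ∈ E₂, p ⬝ᵥ a = 0 then 1 else 0)
        + (if ∃ p ∈ E₃, p ⬝ᵥ a = 0 then 1 else 0) ≤ 2 := by
    intro a ha
    have ha0 : a ≠ 0 := by
      simp only [hA, mem_filter] at ha; exact ha.2
    split_ifs with h1 h2 h3
    · obtain ⟨x, hx, hxa⟩ := h1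
      obtain ⟨y, hy, hya⟩ := h2
      obtain ⟨z, hz, hza⟩ := h3
      exact absurd (hind x hx y hy z hz) (fun h => no_common ha0 hxa hya hza h)
    all_goals omega
  calc ∑ a ∈ A, (((if ∃ p ∈ E₁, p ⬝ᵥ a = 0 then 1 else 0)
        + if ∃ p ∈ E₂, p ⬝ᵥ a = 0 then 1 else 0)
        + (if ∃ p ∈ E₃, p ⬝ᵥ a = 0 then 1 else 0))
      ≤ ∑ _a ∈ A, 2 := sum_le_sum hpt
    _ = 2 * A.card := by simp only [sum_const, smul_eq_mul]; ring

private lemma supp_large {E₁ : Finset (Fin 3 → F)} (h0 : (0 : Fin 3 → F) ∉ E₁)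
    (hq : 3 ≤ Fintype.card F) (hbig : 8 * Fintype.card F ^ 2 < E₁.card) :
    2 * (Fintype.card F ^ 3 - 1) <
      3 * (univ.filter (fun a : Fin 3 → F => a ≠ 0 ∧ ∃ p ∈ E₁, p ⬝ᵥ a = 0)).card := by
  have hk := key_count h0
  set q := Fintype.card F with hqd
  set m := E₁.card with hmd
  set s := (univ.filter (fun a : Fin 3 → F => a ≠ 0 ∧ ∃ p ∈ E₁, p ⬝ᵥ a = 0)).card with hsd
  -- move to the reals
  have hq1 : (1:ℕ) ≤ q ^ 2 := Nat.one_le_pow _ _ (by omega)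
  have hq31 : (1:ℕ) ≤ q ^ 3 := Nat.one_le_pow _ _ (by omega)
  set Q : ℝ := (q : ℝ) with hQd
  set M : ℝ := (m : ℝ) with hMd
  set S : ℝ := (s : ℝ) with hSd
  have hQ3 : (3:ℝ) ≤ Q := by rw [hQd]; exact_mod_cast hq
  have hMb : 8 * Q ^ 2 < M := by
    rw [hQd, hMd]; push_cast; exact_mod_cast (by exact_mod_cast hbig : ((8 * q ^ 2 : ℕ) : ℝ) < (m:ℝ))
  have hkR : (M * (Q ^ 2 - 1)) ^ 2 ≤ S * (M * (M * Q + Q ^ 3)) := by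
    have := hk
    have hcast : ((m * (q ^ 2 - 1)) ^ 2 : ℕ) = ((m:ℝ) * ((q:ℝ) ^ 2 - 1)) ^ 2 := by
      push_cast [Nat.cast_sub hq1]; ring
    calc (M * (Q ^ 2 - 1)) ^ 2 = ((m * (q ^ 2 - 1) : ℕ) ^ 2 : ℝ) := by
          rw [hQd, hMd]; push_cast [Nat.cast_sub hq1]; ring
      _ ≤ ((s * (m * (m * q + q ^ 3)) : ℕ) : ℝ) := by exact_mod_cast this
      _ = S * (M * (M * Q + Q ^ 3)) := by rw [hQd, hMd, hSd]; push_cast; ring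
  -- conclude over ℝ
  have hMpos : 0 < M := lt_trans (by positivity) hMb
  have hfac : (0:ℝ) < Q * (M + Q ^ 2) := by positivity
  have h1 : M * (Q ^ 2 - 1) ^ 2 ≤ S * (Q * (M + Q ^ 2)) := by
    have h2 : (M * (Q ^ 2 - 1) ^ 2) * M ≤ (S * (Q * (M + Q ^ 2))) * M := by nlinarith [hkR]
    exact le_of_mul_le_mul_right h2 hMpos
  have h2 : 2 * (Q ^ 3 - 1) * (Q * (M + Q ^ 2)) < 3 * (M * (Q ^ 2 - 1) ^ 2) := by
    nlinarith [sq_nonneg Q, sq_nonneg (Q - 3), mul_nonneg (sub_nonneg.2 hMb.le) (sq_nonneg Q),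
      mul_pos (mul_pos (by linarith : (0:ℝ) < Q) (by linarith : (0:ℝ) < Q)) hMpos,
      mul_nonneg (mul_nonneg (sq_nonneg Q) (sq_nonneg Q)) (sub_nonneg.2 hQ3),
      mul_nonneg (sub_nonneg.2 hMb.le) (by nlinarith [sq_nonneg (Q ^ 2 - 3), hQ3] : (0:ℝ) ≤ Q ^ 4 - 6 * Q ^ 2 + 2 * Q + 3)]
  have h3 : 2 * (Q ^ 3 - 1) < 3 * S := by
    have h4 : 2 * (Q ^ 3 - 1) * (Q * (M + Q ^ 2)) < 3 * S * (Q * (M + Q ^ 2)) := by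
      calc 2 * (Q ^ 3 - 1) * (Q * (M + Q ^ 2)) < 3 * (M * (Q ^ 2 - 1) ^ 2) := h2
        _ ≤ 3 * (S * (Q * (M + Q ^ 2))) := by linarith
        _ = 3 * S * (Q * (M + Q ^ 2)) := by ring
    exact lt_of_mul_lt_mul_right h4 hfac.le
  -- back to ℕ
  have : ((2 * (q ^ 3 - 1) : ℕ) : ℝ) < ((3 * s : ℕ) : ℝ) := by
    push_cast [Nat.cast_sub hq31]
    convert h3 using 2 <;> simp [hQd, hSd]
  exact_mod_cast this

end Aux

theorem stmt_16 (c : ℝ) (hc : 0 < c) (ε : ℝ) (hε : 0 < ε) :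
    ∃ q₀ : ℕ, ∀ (F : Type) [Field F] [Fintype F] [DecidableEq F],
      q₀ ≤ Fintype.card F →
      ∀ (E : Finset (Fin 3 → F)),
        (E.card : ℝ) ≥ (Fintype.card F : ℝ) ^ ((2 : ℝ) + ε) →
        ¬ ∃ E₁ E₂ E₃ : Finset (Fin 3 → F),
            E₁ ⊆ E ∧ E₂ ⊆ E ∧ E₃ ⊆ E ∧
            (E₁.card : ℝ) ≥ c * E.card ∧ (E₂.card : ℝ) ≥ c * E.card ∧
            (E₃.card : ℝ) ≥ c * E.card ∧
            ∀ x ∈ E₁, ∀ y ∈ E₂, ∀ z ∈ E₃, LinearIndependent F ![x, y, z] := by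
  obtain ⟨n₁, hn₁⟩ := exists_nat_gt ((9 / c) ^ (1 / ε))
  refine ⟨max n₁ 3, ?_⟩
  intro F _ _ _ hq E hE
  rintro ⟨E₁, E₂, E₃, hs₁, hs₂, hs₃, hc₁, hc₂, hc₃, hind⟩
  classical
  set q := Fintype.card F with hqd
  have hq3 : 3 ≤ q := le_trans (le_max_right _ _) hq
  have hQpos : (0:ℝ) < (q:ℝ) := by exact_mod_cast (by omega : 0 < q)
  -- c * q ^ ε ≥ 9
  have h9c : (0:ℝ) ≤ 9 / c := by positivity
  have hn₁q : ((n₁ : ℝ)) ≤ (q:ℝ) := by exact_mod_cast le_trans (le_max_left _ _) hq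
  have hqε : (9 / c) ≤ (q:ℝ) ^ ε := by
    have h1 : ((9 / c) ^ (1 / ε) : ℝ) ≤ (q:ℝ) := le_trans hn₁.le hn₁q
    have h2 : ((9 / c) ^ (1 / ε)) ^ ε ≤ (q:ℝ) ^ ε :=
      Real.rpow_le_rpow (Real.rpow_nonneg h9c _) h1 hε.le
    rwa [← Real.rpow_mul h9c, one_div_mul_cancel hε.ne', Real.rpow_one] at h2
  have hcq : 9 ≤ c * (q:ℝ) ^ ε := by
    calc (9:ℝ) = c * (9 / c) := by field_simp
      _ ≤ c * (q:ℝ) ^ ε := mul_le_mul_of_nonneg_left hqε hc.le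
  -- E is large
  have hE2 : (9:ℝ) * (q:ℝ) ^ 2 ≤ c * E.card := by
    have h1 : c * ((q:ℝ) ^ ((2:ℝ) + ε)) ≤ c * E.card :=
      mul_le_mul_of_nonneg_left hE hc.le
    have h2 : (q:ℝ) ^ ((2:ℝ) + ε) = (q:ℝ) ^ 2 * (q:ℝ) ^ ε := by
      rw [Real.rpow_add hQpos, Real.rpow_two]
    calc (9:ℝ) * (q:ℝ) ^ 2 ≤ (c * (q:ℝ) ^ ε) * (q:ℝ) ^ 2 := by
          apply mul_le_mul_of_nonneg_right hcq (by positivity)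
      _ = c * ((q:ℝ) ^ ((2:ℝ) + ε)) := by rw [h2]; ring
      _ ≤ c * E.card := h1
  have hbig : ∀ (E' : Finset (Fin 3 → F)), (E'.card : ℝ) ≥ c * E.card →
      8 * q ^ 2 < E'.card := by
    intro E' hE'
    have : ((8 * q ^ 2 : ℕ) : ℝ) < (E'.card : ℝ) := by
      push_cast
      nlinarith [hE2, hE', sq_nonneg (q:ℝ), hQpos]
    exact_mod_cast this
  -- the E_i are nonempty and avoid 0
  have hne : ∀ (E' : Finset (Fin 3 → F)), (E'.card : ℝ) ≥ c * E.card → E'.Nonempty := by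
    intro E' hE'
    rw [← card_pos]
    by_contra h
    push_neg at h
    have h0 : E'.card = 0 := by omega
    rw [h0] at hE'
    norm_num at hE'
    nlinarith [hE2, mul_pos hQpos hQpos, hE']
  have h0₁ : (0 : Fin 3 → F) ∉ E₁ := by
    intro h0
    obtain ⟨y, hy⟩ := hne E₂ hc₂
    obtain ⟨z, hz⟩ := hne E₃ hc₃
    have := (hind 0 h0 y hy z hz).ne_zero 0
    simp at this
  have h0₂ : (0 : Fin 3 → F) ∉ E₂ := by
    intro h0
    obtain ⟨x, hx⟩ := hne E₁ hc₁
    obtain ⟨z, hz⟩ := hne E₃ hc₃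
    have := (hind x hx 0 h0 z hz).ne_zero 1
    simp at this
  have h0₃ : (0 : Fin 3 → F) ∉ E₃ := by
    intro h0
    obtain ⟨x, hx⟩ := hne E₁ hc₁
    obtain ⟨y, hy⟩ := hne E₂ hc₂
    have := (hind x hx y hy 0 h0).ne_zero 2
    simp at this
  have b₁ := supp_large h0₁ hq3 (hbig E₁ hc₁)
  have b₂ := supp_large h0₂ hq3 (hbig E₂ hc₂)
  have b₃ := supp_large h0₃ hq3 (hbig E₃ hc₃)
  have hcov := cover_bound hind
  linarith [b₁, b₂, b₃, hcov]
end
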